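/- arXiv:2404.01538 — 8 statements merged into one kernel-verified Lean document; each statement's English description precedes it below -/
import Mathlib

section
/- Let d = n² + r be a positive square-free integer with d ≡ 2 or 3 (mod 4), where n, r are integers with n > 0 and −n < r ≤ n, r ≠ ±1. Then the elements a₁ = 1/2 + ((2n²+r−1)/(4n(n²+r)))√d and a₂ = 1/2 − ((2n²+r−1)/(4n(n²+r)))√d of K = ℚ(√d) are totally positive, and the unary forms a₁x² and a₂x² are perfect. -/
/-!
We model the real quadratic field `K = ℚ(√d)` concretely: an element
`a.1 + a.2·√d` is represented by its pair of rational coordinates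
`a : ℚ × ℚ`, and the ring of integers `O_K = ℤ[√d]` (for `d ≡ 2, 3 mod 4`)
by pairs of integers `x : ℤ × ℤ` representing `x.1 + x.2·√d`.
-/

noncomputable section

/-- An element `a.1 + a.2·√d` of `ℚ(√d)`, given by its rational coordinates. -/
abbrev QF := ℚ × ℚ

/-- The real embedding of `ℚ(√d)` sending `√d` to the positive square root. -/
def emb (d : ℤ) (a : QF) : ℝ := (a.1 : ℝ) + (a.2 : ℝ) * Real.sqrt (d : ℝ)

/-- Galois conjugation on `ℚ(√d)`. -/
def conj (a : QF) : QF := (a.1, -a.2)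

/-- `a ∈ ℚ(√d)` is totally positive: both real embeddings are positive. -/
def TotPos (d : ℤ) (a : QF) : Prop := 0 < emb d a ∧ 0 < emb d (conj a)

/-- Multiplication in `ℚ(√d)`, in coordinates. -/
def qmul (d : ℤ) (a b : QF) : QF :=
  (a.1 * b.1 + (d : ℚ) * a.2 * b.2, a.1 * b.2 + a.2 * b.1)

/-- The element of `ℚ(√d)` represented by `x = x.1 + x.2·√d ∈ ℤ[√d]`. -/
def ofInt (x : ℤ × ℤ) : QF := ((x.1 : ℚ), (x.2 : ℚ))

/-- `Tr_{K/ℚ}(a·x²)` for `a ∈ K = ℚ(√d)` and `x = x.1 + x.2·√d ∈ O_K = ℤ[√d]`. -/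
def trForm (d : ℤ) (a : QF) (x : ℤ × ℤ) : ℚ :=
  2 * (a.1 * ((x.1 : ℚ) ^ 2 + (d : ℚ) * (x.2 : ℚ) ^ 2)
    + 2 * (d : ℚ) * a.2 * (x.1 : ℚ) * (x.2 : ℚ))

/-- `μ` is the minimum `μ(a) = min_{x ∈ O_K, x ≠ 0} Tr(a x²)` of the unary form `a x²`. -/
def IsMinOf (d : ℤ) (a : QF) (μ : ℚ) : Prop :=
  (∃ x : ℤ × ℤ, x ≠ 0 ∧ trForm d a x = μ) ∧ ∀ x : ℤ × ℤ, x ≠ 0 → μ ≤ trForm d a x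

/-- The set `M(a) = {x ∈ O_K : Tr(a x²) = μ}` of minimal vectors of `a x²`,
given its minimum `μ = μ(a)`. -/
def MinVecs (d : ℤ) (a : QF) (μ : ℚ) : Set (ℤ × ℤ) :=
  {x : ℤ × ℤ | trForm d a x = μ}

/-- The unary form `a x²` is perfect: `a` is totally positive and is the unique
totally positive element whose minimum equals `μ(a)` and whose set of minimal
vectors contains `M(a)`. -/
def IsPerfect (d : ℤ) (a : QF) : Prop :=
  TotPos d a ∧ ∃ μ : ℚ, IsMinOf d a μ ∧
    ∀ b : QF, TotPos d b → IsMinOf d b μ → MinVecs d a μ ⊆ MinVecs d b μ → b = a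

/-- `u = u.1 + u.2·√d` is a unit of `ℤ[√d]` (norm `±1`). -/
def IsUnitPair (d : ℤ) (u : ℤ × ℤ) : Prop :=
  u.1 ^ 2 - d * u.2 ^ 2 = 1 ∨ u.1 ^ 2 - d * u.2 ^ 2 = -1

/-- `α + β·√d` (with `α, β > 0`) is the fundamental unit of `ℚ(√d)`:
it is a unit, and it is the smallest unit greater than `1`. -/
def IsFundUnit (d α β : ℤ) : Prop :=
  0 < α ∧ 0 < β ∧ IsUnitPair d (α, β) ∧
    ∀ u : ℤ × ℤ, IsUnitPair d u →
      1 < (u.1 : ℝ) + (u.2 : ℝ) * Real.sqrt (d : ℝ) →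
      (α : ℝ) + (β : ℝ) * Real.sqrt (d : ℝ) ≤ (u.1 : ℝ) + (u.2 : ℝ) * Real.sqrt (d : ℝ)

/-- The unary forms `a x²` and `b x²` lie in the same class up to homothety and
`GL₁(O_K)`-equivalence: `a = λ · b · u²` for some positive rational `λ` and unit `u`. -/
def SameClass (d : ℤ) (a b : QF) : Prop :=
  ∃ lam : ℚ, 0 < lam ∧ ∃ u : ℤ × ℤ, IsUnitPair d u ∧
    a = lam • qmul d b (qmul d (ofInt u) (ofInt u))

lemma keymin (n r x y : ℤ) (hn : 0 < n) (hr1 : 1 - n ≤ r) (hr2 : r ≤ n)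
    (hxy : ¬(x = 0 ∧ y = 0)) :
    n ≤ n * x ^ 2 + (2 * n ^ 2 + r - 1) * x * y + n * (n ^ 2 + r) * y ^ 2 := by
  have hrsq : (r - 1) ^ 2 ≤ n ^ 2 := by nlinarith
  have h4n : (0 : ℤ) < 4 * n := by linarith
  have main : 4 * n * n ≤ 4 * n * (n * x ^ 2 + (2*n^2+r-1) * x * y + n * (n^2+r) * y ^ 2) := by
    rcases eq_or_ne y 0 with rfl | hy
    · have hx : x ≠ 0 := fun h => hxy ⟨h, rfl⟩
      have hx1 : 1 ≤ x ^ 2 := by rcases hx.lt_or_gt with h | h <;> nlinarith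
      nlinarith
    · have hy1 : 1 ≤ y ^ 2 := by rcases hy.lt_or_gt with h | h <;> nlinarith
      rcases eq_or_lt_of_le hy1 with hysq | hygt
      · -- case y^2 = 1
        have hy2 : y ^ 2 = 1 := hysq.symm
        have hkk : 0 ≤ (x*y+n) * (n*(x*y+n) + r - 1) := by
          rcases lt_trichotomy (x*y+n) 0 with h | h | h
          · have h1 : x*y+n ≤ -1 := by omega
            have h2 : n*(x*y+n) ≤ n*(-1) := mul_le_mul_of_nonneg_left h1 hn.le
            have h3 : (0:ℤ) ≤ -(x*y+n) := by linarith
            have h4 : (0:ℤ) ≤ -(n*(x*y+n)+r-1) := by linarith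
            nlinarith [mul_nonneg h3 h4]
          · rw [h]; simp
          · have h1 : (1:ℤ) ≤ x*y+n := h
            have h2 : n*1 ≤ n*(x*y+n) := mul_le_mul_of_nonneg_left h1 hn.le
            have h3 : (0:ℤ) ≤ x*y+n := by linarith
            have h4 : (0:ℤ) ≤ n*(x*y+n)+r-1 := by linarith
            exact mul_nonneg h3 h4
        have hid : 4*n*(n*x^2 + (2*n^2+r-1)*x*y + n*(n^2+r)*y^2)
            = 4*n*n + 4*n*((x*y+n)*(n*(x*y+n)+r-1))
              + (4*n^2*x^2 - 4*n^2*(n^2+r))*(1 - y^2) := by ring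
        have h3 : (4*n^2*x^2 - 4*n^2*(n^2+r))*(1 - y^2) = 0 := by rw [hy2]; ring
        have h5 : 0 ≤ 4*n*((x*y+n)*(n*(x*y+n)+r-1)) :=
          mul_nonneg (by linarith) hkk
        linarith
      · -- case y^2 ≥ 2, hence ≥ 4
        have hy4 : 4 ≤ y ^ 2 := by
          rcases le_or_gt 2 y with h | h
          · nlinarith
          · rcases le_or_gt y (-2) with h' | h'
            · nlinarith
            · interval_cases y <;> norm_num at hygt
        have hA : 0 ≤ (2*n*x + (2*n^2+r-1)*y)^2 := sq_nonneg _
        have hB2 : 4*(4*n^2 - (r-1)^2) ≤ (4*n^2 - (r-1)^2) * y^2 := by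
          nlinarith [hy4, hrsq, sq_nonneg n]
        have hid2 : 4*n*(n*x^2 + (2*n^2+r-1)*x*y + n*(n^2+r)*y^2)
            = (2*n*x + (2*n^2+r-1)*y)^2 + (4*n^2 - (r-1)^2)*y^2 := by ring
        nlinarith [hA, hB2, hid2, hrsq, sq_nonneg n]
  exact le_of_mul_le_mul_left main h4n

lemma conj_trForm (d : ℤ) (a : QF) (x : ℤ × ℤ) :
    trForm d (conj a) (x.1, -x.2) = trForm d a x := by
  simp only [trForm, conj]
  push_cast
  ring

lemma conj_trForm' (d : ℤ) (a : QF) (x : ℤ × ℤ) :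
    trForm d (conj a) x = trForm d a (x.1, -x.2) := by
  have h := conj_trForm d a (x.1, -x.2)
  simpa using h

lemma neg2_ne_zero (x : ℤ × ℤ) (hx : x ≠ 0) : ((x.1, -x.2) : ℤ × ℤ) ≠ 0 := by
  simp only [Ne, Prod.ext_iff] at hx ⊢
  simp only [Prod.fst_zero, Prod.snd_zero, neg_eq_zero]
  exact hx

lemma totpos_conj (d : ℤ) (a : QF) : TotPos d (conj a) ↔ TotPos d a := by
  unfold TotPos conj emb
  dsimp only
  rw [neg_neg]
  exact and_comm

lemma isminof_conj (d : ℤ) (a : QF) (μ : ℚ) (h : IsMinOf d a μ) : IsMinOf d (conj a) μ := by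
  obtain ⟨⟨x, hx0, hxe⟩, hlb⟩ := h
  constructor
  · exact ⟨(x.1, -x.2), neg2_ne_zero x hx0, by rw [conj_trForm]; exact hxe⟩
  · intro y hy0
    rw [conj_trForm']
    exact hlb (y.1, -y.2) (neg2_ne_zero y hy0)

lemma conj_conj (a : QF) : conj (conj a) = a := by simp [conj]

lemma perfect_conj (d : ℤ) (a : QF) (h : IsPerfect d a) : IsPerfect d (conj a) := by
  obtain ⟨hpos, μ, hmin, huniq⟩ := h
  refine ⟨(totpos_conj d a).mpr hpos, μ, isminof_conj d a μ hmin, ?_⟩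
  intro b hb hbmin hsubs
  have h1 : conj b = a := by
    apply huniq (conj b) ((totpos_conj d b).mpr hb) (isminof_conj d b μ hbmin)
    intro z hz
    show trForm d (conj b) z = μ
    rw [conj_trForm']
    have hz2 : (z.1, -z.2) ∈ MinVecs d (conj a) μ := by
      show trForm d (conj a) (z.1, -z.2) = μ
      rw [conj_trForm]
      exact hz
    exact hsubs hz2
  rw [← conj_conj b, h1]

lemma master (d n r : ℤ) (hd : d = n ^ 2 + r) (hn : 0 < n) (hr1 : -n < r) (hr2 : r ≤ n) :
    TotPos d ((1 / 2 : ℚ), (2 * (n : ℚ) ^ 2 + (r : ℚ) - 1) / (4 * (n : ℚ) * ((n : ℚ) ^ 2 + (r : ℚ)))) ∧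
    IsPerfect d ((1 / 2 : ℚ), (2 * (n : ℚ) ^ 2 + (r : ℚ) - 1) / (4 * (n : ℚ) * ((n : ℚ) ^ 2 + (r : ℚ)))) := by
  set c : ℚ := (2 * (n : ℚ) ^ 2 + (r : ℚ) - 1) / (4 * (n : ℚ) * ((n : ℚ) ^ 2 + (r : ℚ))) with hc
  set a : QF := ((1 / 2 : ℚ), c) with ha
  have hdpos : 0 < d := by nlinarith
  have hdq : (d : ℚ) = (n : ℚ) ^ 2 + (r : ℚ) := by rw [hd]; push_cast; ring
  have hnq : ((n : ℚ)) ≠ 0 := by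
    simp only [ne_eq, Int.cast_eq_zero]; omega
  have hnqpos : (0 : ℚ) < (n : ℚ) := by exact_mod_cast hn
  have hDpos : (0 : ℚ) < (n : ℚ) ^ 2 + (r : ℚ) := by
    rw [← hdq]; exact_mod_cast hdpos
  have hD0 : ((n : ℚ) ^ 2 + (r : ℚ)) ≠ 0 := ne_of_gt hDpos
  -- total positivity
  have hm2 : (2 * (n:ℚ) ^ 2 + r - 1) ^ 2 < 4 * (n:ℚ) ^ 2 * ((n:ℚ) ^ 2 + r) := by
    have hz : (2 * n ^ 2 + r - 1) ^ 2 < 4 * n ^ 2 * (n ^ 2 + r) := by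
      have h1 : (r - 1) ^ 2 ≤ n ^ 2 := by nlinarith
      nlinarith
    exact_mod_cast hz
  have hcd : c ^ 2 * (d : ℚ) < 1 / 4 := by
    have hce : c ^ 2 * (d : ℚ)
        = (2 * (n:ℚ) ^ 2 + r - 1) ^ 2 / (16 * (n:ℚ) ^ 2 * ((n:ℚ) ^ 2 + r)) := by
      rw [hc, hdq]; field_simp; ring
    rw [hce, div_lt_iff₀ (by positivity)]
    nlinarith [hm2]
  have hs0 : (0 : ℝ) ≤ (d : ℝ) := by exact_mod_cast hdpos.le
  have hs2 : Real.sqrt (d : ℝ) ^ 2 = (d : ℝ) := Real.sq_sqrt hs0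
  have hts : ((c : ℝ) * Real.sqrt (d : ℝ)) ^ 2 < 1 / 4 := by
    rw [mul_pow, hs2]
    have : ((c ^ 2 * (d:ℚ) : ℚ) : ℝ) < ((1/4 : ℚ) : ℝ) := by exact_mod_cast hcd
    push_cast at this
    linarith
  have htp : TotPos d a := by
    constructor
    · show (0 : ℝ) < ((a.1 : ℚ) : ℝ) + ((a.2 : ℚ) : ℝ) * Real.sqrt (d : ℝ)
      rw [ha]
      dsimp only
      push_cast
      nlinarith [hts, sq_nonneg ((c : ℝ) * Real.sqrt (d : ℝ) + 1/2)]
    · show (0 : ℝ) < (((conj a).1 : ℚ) : ℝ) + (((conj a).2 : ℚ) : ℝ) * Real.sqrt (d : ℝ)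
      rw [ha]
      simp only [conj]
      push_cast
      nlinarith [hts, sq_nonneg ((c : ℝ) * Real.sqrt (d : ℝ) - 1/2)]
  -- minimal vector values
  have h10 : trForm d a (1, 0) = 1 := by
    simp [trForm, ha]
  have hv2 : trForm d a ((n : ℤ), -1) = 1 := by
    simp only [trForm, ha, hc, hdq]
    push_cast
    field_simp
    ring
  refine ⟨htp, htp, 1, ⟨⟨(1, 0), by norm_num [Prod.ext_iff], h10⟩, ?_⟩, ?_⟩
  · -- lower bound
    intro x hx
    have hxy : ¬(x.1 = 0 ∧ x.2 = 0) := by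
      simp only [Ne, Prod.ext_iff, Prod.fst_zero, Prod.snd_zero] at hx
      exact hx
    have key := keymin n r x.1 x.2 hn (by omega) hr2 hxy
    have heq : (n : ℚ) * trForm d a x
        = ((n * x.1 ^ 2 + (2 * n ^ 2 + r - 1) * x.1 * x.2 + n * (n ^ 2 + r) * x.2 ^ 2 : ℤ) : ℚ) := by
      simp only [trForm, ha, hc, hdq]
      push_cast
      field_simp
      ring
    have h2 : (n : ℚ) * 1 ≤ (n : ℚ) * trForm d a x := by
      rw [mul_one, heq]
      exact_mod_cast key
    exact le_of_mul_le_mul_left h2 hnqpos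
  · -- uniqueness
    intro b hb hbmin hsub
    have hb1 : trForm d b (1, 0) = 1 := hsub (show (1,0) ∈ MinVecs d a 1 from h10)
    have hb2 : trForm d b ((n : ℤ), -1) = 1 := hsub (show ((n:ℤ),-1) ∈ MinVecs d a 1 from hv2)
    simp only [trForm] at hb1 hb2
    push_cast at hb1 hb2
    norm_num at hb1
    -- hb1 : b.1 = 1/2 (hopefully)
    have hbfst : b.1 = 1 / 2 := by linarith
    have hbsnd : b.2 = c := by
      rw [hc]
      rw [hbfst, hdq] at hb2
      field_simp
      field_simp at hb2
      linarith
    have : b = ((1/2 : ℚ), c) := Prod.ext hbfst hbsnd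
    rw [this, ha]

/-- for `d = n² + r` positive square-free, `d ≡ 2, 3 mod 4`, `n > 0`,
`−n < r ≤ n`, `r ≠ ±1`, the elements `a₁, a₂ = 1/2 ± ((2n²+r−1)/(4n(n²+r)))·√d`
are totally positive and the unary forms `a₁ x²`, `a₂ x²` are perfect. -/
theorem statement0 (d n r : ℤ) (hd : d = n ^ 2 + r) (hdpos : 0 < d) (hsf : Squarefree d)
    (hmod : d % 4 = 2 ∨ d % 4 = 3) (hn : 0 < n) (hr1 : -n < r) (hr2 : r ≤ n)
    (hrne1 : r ≠ 1) (hrnem1 : r ≠ -1) :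
    let a₁ : QF := (1 / 2, (2 * (n : ℚ) ^ 2 + (r : ℚ) - 1) / (4 * (n : ℚ) * ((n : ℚ) ^ 2 + (r : ℚ))))
    let a₂ : QF := (1 / 2, -((2 * (n : ℚ) ^ 2 + (r : ℚ) - 1) / (4 * (n : ℚ) * ((n : ℚ) ^ 2 + (r : ℚ)))))
    TotPos d a₁ ∧ TotPos d a₂ ∧ IsPerfect d a₁ ∧ IsPerfect d a₂ := by
  intro a₁ a₂
  obtain ⟨ht, hp⟩ := master d n r hd hn hr1 hr2
  exact ⟨ht, (totpos_conj d _).mpr ht, hp, perfect_conj d _ hp⟩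
end
end

section
/- Let d = n² + r be a positive square-free integer with d ≡ 2 or 3 (mod 4), where n, r are integers with n > 0 and −n < r ≤ n, r ≠ ±1, and let a₁ = 1/2 + ((2n²+r−1)/(4n(n²+r)))√d ∈ K = ℚ(√d). Then μ(a₁) = 1 and {±1, ±(n − √d)} ⊆ M(a₁). -/
/-!
We model the real quadratic field `K = ℚ(√d)` concretely: an element
`a.1 + a.2·√d` is represented by its pair of rational coordinates
`a : ℚ × ℚ`, and the ring of integers `O_K = ℤ[√d]` (for `d ≡ 2, 3 mod 4`)
by pairs of integers `x : ℤ × ℤ` representing `x.1 + x.2·√d`.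
-/

noncomputable section

private lemma keyineq (n r p q : ℤ) (hn : 0 < n) (hr1 : -n < r) (hr2 : r ≤ n)
    (h : ¬(p = 0 ∧ q = 0)) :
    4 * n ^ 2 ≤ (2*n*p + (2*n^2+r-1)*q)^2 + (4*n^2-(r-1)^2)*q^2 := by
  have hrsq : (r-1)^2 ≤ n^2 := by nlinarith [mul_nonneg (by omega : (0:ℤ) ≤ n - (r-1)) (by omega : (0:ℤ) ≤ n + (r-1))]
  rcases eq_or_ne q 0 with hq | hq
  · subst hq
    have hp : p ≠ 0 := by tauto
    have hp2 : 1 ≤ p ^ 2 := by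
      rcases hp.lt_or_gt with h | h <;> nlinarith
    nlinarith
  · rcases eq_or_ne q 1 with h1 | h1
    · subst h1
      rcases eq_or_ne (p + n) 0 with hm | hm
      · have : p = -n := by omega
        subst this; ring_nf; nlinarith
      · have hm2 : 1 ≤ (p + n) ^ 2 := by
          rcases hm.lt_or_gt with h | h <;> nlinarith
        nlinarith [sq_nonneg (n*(p+n) + (r-1)), sq_nonneg (n*(p+n))]
    · rcases eq_or_ne q (-1) with h2 | h2
      · subst h2
        rcases eq_or_ne (p - n) 0 with hm | hm
        · have : p = n := by omega
          subst this; ring_nf; nlinarith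
        · have hm2 : 1 ≤ (p - n) ^ 2 := by
            rcases hm.lt_or_gt with h | h <;> nlinarith
          nlinarith [sq_nonneg (n*(p-n) - (r-1)), sq_nonneg (n*(p-n))]
      · have hq2 : 4 ≤ q ^ 2 := by
          rcases (by omega : q ≤ -2 ∨ 2 ≤ q) with h | h <;> nlinarith
        nlinarith [sq_nonneg (2*n*p + (2*n^2+r-1)*q), mul_le_mul_of_nonneg_left hq2 (by nlinarith : (0:ℤ) ≤ 4*n^2-(r-1)^2), sq_nonneg n]

/-- for `d = n² + r` as above, `a₁ = 1/2 + ((2n²+r−1)/(4n(n²+r)))·√d`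
has minimum `μ(a₁) = 1` and `{±1, ±(n − √d)} ⊆ M(a₁)`. -/
theorem statement1 (d n r : ℤ) (hd : d = n ^ 2 + r) (hdpos : 0 < d) (hsf : Squarefree d)
    (hmod : d % 4 = 2 ∨ d % 4 = 3) (hn : 0 < n) (hr1 : -n < r) (hr2 : r ≤ n)
    (hrne1 : r ≠ 1) (hrnem1 : r ≠ -1) :
    let a₁ : QF := (1 / 2, (2 * (n : ℚ) ^ 2 + (r : ℚ) - 1) / (4 * (n : ℚ) * ((n : ℚ) ^ 2 + (r : ℚ))))
    IsMinOf d a₁ 1 ∧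
      ({(1, 0), (-1, 0), (n, -1), (-n, 1)} : Set (ℤ × ℤ)) ⊆ MinVecs d a₁ 1 := by
  intro a₁
  have hn0 : (n : ℚ) ≠ 0 := by exact_mod_cast hn.ne'
  have hdq : (d : ℚ) = (n : ℚ) ^ 2 + (r : ℚ) := by exact_mod_cast congrArg (Int.cast : ℤ → ℚ) hd
  have hd0 : (n : ℚ) ^ 2 + (r : ℚ) ≠ 0 := by
    rw [← hdq]; exact_mod_cast hdpos.ne'
  have key : ∀ x : ℤ × ℤ, trForm d a₁ x =
      (((2*n*x.1 + (2*n^2+r-1)*x.2)^2 + (4*n^2-(r-1)^2)*x.2^2 : ℤ) : ℚ) / (4 * (n:ℚ)^2) := by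
    intro x
    show (2 * (1/2 * ((x.1 : ℚ) ^ 2 + (d : ℚ) * (x.2 : ℚ) ^ 2)
      + 2 * (d : ℚ) * ((2 * (n : ℚ) ^ 2 + (r : ℚ) - 1) / (4 * (n : ℚ) * ((n : ℚ) ^ 2 + (r : ℚ)))) * (x.1 : ℚ) * (x.2 : ℚ))) = _
    rw [hdq]
    push_cast
    field_simp
    ring
  have hne : ∀ x : ℤ × ℤ, x ≠ 0 → ¬(x.1 = 0 ∧ x.2 = 0) := by
    intro x hx h
    exact hx (Prod.ext h.1 h.2)
  have hval : ∀ x : ℤ × ℤ, (2*n*x.1 + (2*n^2+r-1)*x.2)^2 + (4*n^2-(r-1)^2)*x.2^2 = 4*n^2 →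
      trForm d a₁ x = 1 := by
    intro x hx
    rw [key x, hx]
    push_cast
    field_simp
  constructor
  · constructor
    · exact ⟨(1, 0), by simp [Prod.ext_iff], hval (1,0) (by ring)⟩
    · intro x hx
      rw [key x, le_div_iff₀ (by positivity), one_mul]
      exact_mod_cast keyineq n r x.1 x.2 hn hr1 hr2 (hne x hx)
  · intro x hx
    simp only [Set.mem_insert_iff, Set.mem_singleton_iff] at hx
    rcases hx with h | h | h | h <;> subst h <;>
      exact hval _ (by ring)
end
end

section
/- Let m ≥ 3 be an odd integer, δ ∈ {+1, −1}, k ≥ 0 an integer (with k ≥ 1 if δ = −1), β = m(m+2), α = km²(m+2)² + δ((m−1)/2·(m+2)² + 1), and let d be a positive integer with α² − dβ² = 1. Set l = km(m+2) + δ(m+1)/2. Then dα + l²α − 2ldβ = k((m+1)² + 1) + δ(m+1)/2, and this quantity is strictly less than α. -/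
/-!
We model the real quadratic field `K = ℚ(√d)` concretely: an element
`a.1 + a.2·√d` is represented by its pair of rational coordinates
`a : ℚ × ℚ`, and the ring of integers `O_K = ℤ[√d]` (for `d ≡ 2, 3 mod 4`)
by pairs of integers `x : ℤ × ℤ` representing `x.1 + x.2·√d`.
-/

noncomputable section

/-- with `l = km(m+2) + δ(m+1)/2` one has
`dα + l²α − 2ldβ = k((m+1)² + 1) + δ(m+1)/2 < α`. -/
theorem statement6 (m δ k d : ℤ) (hm : 3 ≤ m) (hmodd : Odd m)
    (hδ : δ = 1 ∨ δ = -1) (hk : 0 ≤ k) (hkδ : δ = -1 → 1 ≤ k)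
    (β α : ℤ) (hβ : β = m * (m + 2))
    (hα : α = k * m ^ 2 * (m + 2) ^ 2 + δ * ((m - 1) / 2 * (m + 2) ^ 2 + 1))
    (hdpos : 0 < d) (hpell : α ^ 2 - d * β ^ 2 = 1)
    (l : ℤ) (hl : l = k * m * (m + 2) + δ * ((m + 1) / 2)) :
    d * α + l ^ 2 * α - 2 * l * d * β = k * ((m + 1) ^ 2 + 1) + δ * ((m + 1) / 2) ∧
      k * ((m + 1) ^ 2 + 1) + δ * ((m + 1) / 2) < α := by
  obtain ⟨t, ht⟩ := hmodd
  have h1 : (m - 1) / 2 = t := by omega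
  have h2 : (m + 1) / 2 = t + 1 := by omega
  rw [h1] at hα
  rw [h2] at hl ⊢
  have ht1 : 1 ≤ t := by omega
  constructor
  · have key : β ^ 2 * (d * α + l ^ 2 * α - 2 * l * d * β)
        = β ^ 2 * (k * ((m + 1) ^ 2 + 1) + δ * (t + 1)) := by
      rcases hδ with h | h
      · subst h ht hβ hα hl
        linear_combination (2 * (k * (2*t+1) * (2*t+3) + (t+1)) * ((2*t+1) * (2*t+3))
          - (k * (2*t+1) ^ 2 * (2*t+3) ^ 2 + (t * (2*t+3) ^ 2 + 1))) * hpell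
      · subst h ht hβ hα hl
        linear_combination (2 * (k * (2*t+1) * (2*t+3) - (t+1)) * ((2*t+1) * (2*t+3))
          - (k * (2*t+1) ^ 2 * (2*t+3) ^ 2 - (t * (2*t+3) ^ 2 + 1))) * hpell
    have hβpos : 0 < β := by rw [hβ]; nlinarith
    exact mul_left_cancel₀ (by positivity) key
  · rcases hδ with h | h
    · subst h ht hα
      nlinarith [mul_nonneg hk (sq_nonneg t), sq_nonneg t]
    · have hk1 : 1 ≤ k := hkδ h
      subst h ht hα
      have hX : 0 ≤ (2*t+1)^2*(2*t+3)^2 - ((2*t+2)^2+1) := by nlinarith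
      have h5 := mul_le_mul_of_nonneg_right hk1 hX
      nlinarith [h5, sq_nonneg t, ht1]
end
end

section
/- Let m ≥ 3 be an odd integer, δ ∈ {+1, −1}, k ≥ 0 an integer (with k ≥ 1 if δ = −1), β = m(m+2), α = km²(m+2)² + δ((m−1)/2·(m+2)² + 1), and let d be a positive integer with α² − dβ² = 1. Set l = km(m+2) + δ(m+1)/2. Then |dβ/α − l| < 1/m < 1/2; in particular l is the nearest integer to dβ/α. -/
/-!
We model the real quadratic field `K = ℚ(√d)` concretely: an element
`a.1 + a.2·√d` is represented by its pair of rational coordinates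
`a : ℚ × ℚ`, and the ring of integers `O_K = ℤ[√d]` (for `d ≡ 2, 3 mod 4`)
by pairs of integers `x : ℤ × ℤ` representing `x.1 + x.2·√d`.
-/

noncomputable section

/-- with `l = km(m+2) + δ(m+1)/2` one has
`|dβ/α − l| < 1/m < 1/2`; in particular `l` is the nearest integer to `dβ/α`. -/
theorem statement7 (m δ k d : ℤ) (hm : 3 ≤ m) (hmodd : Odd m)
    (hδ : δ = 1 ∨ δ = -1) (hk : 0 ≤ k) (hkδ : δ = -1 → 1 ≤ k)
    (β α : ℤ) (hβ : β = m * (m + 2))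
    (hα : α = k * m ^ 2 * (m + 2) ^ 2 + δ * ((m - 1) / 2 * (m + 2) ^ 2 + 1))
    (hdpos : 0 < d) (hpell : α ^ 2 - d * β ^ 2 = 1)
    (l : ℤ) (hl : l = k * m * (m + 2) + δ * ((m + 1) / 2)) :
    |(d : ℚ) * (β : ℚ) / (α : ℚ) - (l : ℚ)| < 1 / (m : ℚ) ∧
      1 / (m : ℚ) < 1 / 2 ∧
      round ((d : ℚ) * (β : ℚ) / (α : ℚ)) = l := by
  obtain ⟨n, hn⟩ := hmodd
  have hn1 : 1 ≤ n := by omega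
  have h1 : (m - 1) / 2 = n := by omega
  have h2 : (m + 1) / 2 = n + 1 := by omega
  rw [h1] at hα
  rw [h2] at hl
  -- key identity : α - β * l = -δ * (m + 1)
  have hkey : α - β * l = -δ * (m + 1) := by
    subst hα hl hβ
    linear_combination (-δ * (m + 2)) * hn
  -- α ≥ 2
  have hα2 : 2 ≤ α := by
    rcases hδ with h | h <;> subst h
    · nlinarith [sq_nonneg (m + 2), mul_nonneg (mul_nonneg hk (sq_nonneg m)) (sq_nonneg (m + 2))]
    · have hk1 : 1 ≤ k := hkδ rfl
      nlinarith [sq_nonneg (m + 2), sq_nonneg m,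
        mul_le_mul hk1 (le_refl (m ^ 2 * (m + 2) ^ 2)) (by positivity) (by linarith),
        mul_le_mul (show (n : ℤ) + 1 ≤ m ^ 2 by nlinarith) (le_refl ((m + 2) ^ 2))
          (by positivity) (by nlinarith)]
  have hβpos : 0 < β := by subst hβ; nlinarith
  -- rational versions
  have hmQ : (3 : ℚ) ≤ (m : ℚ) := by exact_mod_cast hm
  have hαQ : (2 : ℚ) ≤ (α : ℚ) := by exact_mod_cast hα2
  have hβQ : ((β : ℚ)) = (m : ℚ) * ((m : ℚ) + 2) := by
    rw [hβ]; push_cast; ring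
  have hAne : (α : ℚ) ≠ 0 := by positivity
  have hBpos : (0 : ℚ) < (β : ℚ) := by exact_mod_cast hβpos
  have hBne : (β : ℚ) ≠ 0 := ne_of_gt hBpos
  have hpellQ : (α : ℚ) ^ 2 - (d : ℚ) * (β : ℚ) ^ 2 = 1 := by exact_mod_cast hpell
  have hkeyQ : (α : ℚ) - (β : ℚ) * (l : ℚ) = -(δ : ℚ) * ((m : ℚ) + 1) := by
    exact_mod_cast hkey
  have hABpos : (0 : ℚ) < (α : ℚ) * (β : ℚ) := by positivity
  have hmpos : (0 : ℚ) < (m : ℚ) := by linarith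
  have hx : (d : ℚ) * (β : ℚ) / (α : ℚ) - (l : ℚ)
      = (-(δ : ℚ) * (α : ℚ) * ((m : ℚ) + 1) - 1) / ((α : ℚ) * (β : ℚ)) := by
    rw [div_sub' hAne, div_eq_div_iff hAne (ne_of_gt hABpos)]
    linear_combination (-(α:ℚ)) * hpellQ + (α:ℚ)^2 * hkeyQ
  have habs : |(d : ℚ) * (β : ℚ) / (α : ℚ) - (l : ℚ)| < 1 / (m : ℚ) := by
    rw [abs_lt]
    constructor
    · rw [hx, show -(1 / (m : ℚ)) = (-1) / (m : ℚ) by ring,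
        div_lt_div_iff₀ hmpos hABpos]
      rcases hδ with h | h <;> subst h <;> push_cast
      · rw [hβQ]
        nlinarith [mul_le_mul_of_nonneg_right hαQ hmpos.le, mul_pos hmpos hmpos]
      · have hpos2 : (0:ℚ) < (α:ℚ) * ((m:ℚ) + 1) - 1 := by nlinarith
        nlinarith [mul_pos hpos2 hmpos, hABpos]
    · rw [hx, div_lt_div_iff₀ hABpos hmpos]
      rcases hδ with h | h <;> subst h <;> push_cast
      · have hpos1 : (0:ℚ) < (α:ℚ) * ((m:ℚ) + 1) + 1 := by nlinarith
        nlinarith [mul_pos hpos1 hmpos, hABpos]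
      · rw [hβQ]
        nlinarith [mul_pos (show (0:ℚ) < (α:ℚ) by linarith) hmpos]
  have hhalf : 1 / (m : ℚ) < 1 / 2 := by
    rw [div_lt_div_iff₀ hmpos (by norm_num : (0:ℚ) < 2)]; linarith
  refine ⟨habs, hhalf, ?_⟩
  have h3 : |(d : ℚ) * (β : ℚ) / (α : ℚ) - (l : ℚ)| < 1 / 2 := lt_trans habs hhalf
  rw [abs_lt] at h3
  rw [round_eq, Int.floor_eq_iff]
  constructor <;> push_cast <;> [linarith; linarith]
end
end

section
/- Let d be a positive square-free integer with d ≡ 2 or 3 (mod 4), d = n² + r with integers n > 0 and −(n−1) < r < n, r ≠ ±1, and let a₁ = 1/2 + ((2n²+r−1)/(4n(n²+r)))√d and a₂ = 1/2 − ((2n²+r−1)/(4n(n²+r)))√d in K = ℚ(√d). Then M(a₁) = {±1, ±(n − √d)} and M(a₂) = {±1, ±(n + √d)} exactly. -/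
/-!
We model the real quadratic field `K = ℚ(√d)` concretely: an element
`a.1 + a.2·√d` is represented by its pair of rational coordinates
`a : ℚ × ℚ`, and the ring of integers `O_K = ℤ[√d]` (for `d ≡ 2, 3 mod 4`)
by pairs of integers `x : ℤ × ℤ` representing `x.1 + x.2·√d`.
-/

noncomputable section

lemma master_s12 (n r x y : ℤ) (hn : 0 < n) (hr1 : -(n - 1) < r) (hr2 : r < n)
    (hxy : ¬(x = 0 ∧ y = 0)) :
    n ≤ n * x ^ 2 + (2 * n ^ 2 + r - 1) * x * y + n * (n ^ 2 + r) * y ^ 2 ∧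
      (n * x ^ 2 + (2 * n ^ 2 + r - 1) * x * y + n * (n ^ 2 + r) * y ^ 2 = n →
        (x = 1 ∧ y = 0) ∨ (x = -1 ∧ y = 0) ∨ (x = n ∧ y = -1) ∨ (x = -n ∧ y = 1)) := by
  have hs : (r - 1) ^ 2 ≤ (n - 1) ^ 2 := by nlinarith
  rcases eq_or_ne y 0 with rfl | hy0
  · have hx : x ≠ 0 := fun h => hxy ⟨h, rfl⟩
    have hx2 : 1 ≤ x ^ 2 := by rcases hx.lt_or_gt with h | h <;> nlinarith
    constructor
    · nlinarith
    · intro hN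
      have hx1 : x ^ 2 = 1 := by nlinarith
      have hb : -1 ≤ x ∧ x ≤ 1 := by constructor <;> nlinarith
      rcases (by omega : x = 1 ∨ x = -1) with rfl | rfl
      · exact Or.inl ⟨rfl, rfl⟩
      · exact Or.inr (Or.inl ⟨rfl, rfl⟩)
  rcases eq_or_ne y 1 with rfl | hy1
  · rcases eq_or_ne x (-n) with rfl | hx
    · exact ⟨by nlinarith, fun _ => Or.inr (Or.inr (Or.inr ⟨rfl, rfl⟩))⟩
    · have key : 0 < (x + n) * (n * (x + n) + r - 1) := by
        rcases (by omega : x + n ≤ -1 ∨ 1 ≤ x + n) with h | h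
        · have h1 : n * (x + n) + r - 1 < 0 := by nlinarith
          nlinarith
        · have h1 : 0 < n * (x + n) + r - 1 := by nlinarith
          nlinarith
      have hlt : n < n * x ^ 2 + (2 * n ^ 2 + r - 1) * x * 1 + n * (n ^ 2 + r) * 1 ^ 2 := by
        nlinarith [key]
      exact ⟨hlt.le, fun h => absurd h (by linarith)⟩
  rcases eq_or_ne y (-1) with rfl | hym1
  · rcases eq_or_ne x n with rfl | hx
    · exact ⟨by nlinarith, fun _ => Or.inr (Or.inr (Or.inl ⟨rfl, rfl⟩))⟩
    · have key : 0 < (x - n) * (n * (x - n) - (r - 1)) := by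
        rcases (by omega : x - n ≤ -1 ∨ 1 ≤ x - n) with h | h
        · have h1 : n * (x - n) - (r - 1) < 0 := by nlinarith
          nlinarith
        · have h1 : 0 < n * (x - n) - (r - 1) := by nlinarith
          nlinarith
      have hlt : n < n * x ^ 2 + (2 * n ^ 2 + r - 1) * x * (-1) + n * (n ^ 2 + r) * (-1) ^ 2 := by
        nlinarith [key]
      exact ⟨hlt.le, fun h => absurd h (by linarith)⟩
  · have hy4 : 4 ≤ y ^ 2 := by rcases (by omega : y ≤ -2 ∨ 2 ≤ y) with h | h <;> nlinarith
    have hD : 0 < 4 * n ^ 2 - (r - 1) ^ 2 := by nlinarith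
    have hDy : 0 ≤ (4 * n ^ 2 - (r - 1) ^ 2) * (y ^ 2 - 4) :=
      mul_nonneg hD.le (by linarith)
    have hlt : n < n * x ^ 2 + (2 * n ^ 2 + r - 1) * x * y + n * (n ^ 2 + r) * y ^ 2 := by
      nlinarith [sq_nonneg (2 * n * x + (2 * n ^ 2 + r - 1) * y), hDy, hn, hs]
    exact ⟨hlt.le, fun h => absurd h (by linarith)⟩

lemma minvecs_eq (n r : ℤ) (hn : 0 < n) (hdpos : 0 < n ^ 2 + r)
    (hr1 : -(n - 1) < r) (hr2 : r < n) (a : QF) (ε : ℤ) (hε : ε = 1 ∨ ε = -1)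
    (htr : ∀ x y : ℤ, trForm (n ^ 2 + r) a (x, y) * n
      = ((n * x ^ 2 + (2 * n ^ 2 + r - 1) * x * (ε * y) + n * (n ^ 2 + r) * (ε * y) ^ 2 : ℤ) : ℚ))
    (μ : ℚ) (hμ : IsMinOf (n ^ 2 + r) a μ) :
    MinVecs (n ^ 2 + r) a μ = ({(1, 0), (-1, 0), (n, -ε), (-n, ε)} : Set (ℤ × ℤ)) := by
  have hnq : (0 : ℚ) < (n : ℚ) := by exact_mod_cast hn
  have hnq0 : ((n : ℚ)) ≠ 0 := hnq.ne'
  have hge : ∀ p : ℤ × ℤ, p ≠ 0 → 1 ≤ trForm (n ^ 2 + r) a p := by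
    rintro ⟨x, y⟩ hp
    rw [Ne, Prod.mk_eq_zero] at hp
    have hne : ¬(x = 0 ∧ ε * y = 0) := by
      rcases hε with rfl | rfl <;> · intro h; exact hp ⟨h.1, by omega⟩
    have h1 := (master_s12 n r x (ε * y) hn hr1 hr2 hne).1
    have h2 := htr x y
    have h3 : (n : ℚ) ≤ trForm (n ^ 2 + r) a (x, y) * n := by
      rw [h2]; exact_mod_cast h1
    nlinarith
  have hone : trForm (n ^ 2 + r) a (1, 0) = 1 := by
    refine mul_right_cancel₀ hnq0 ?_
    rw [htr 1 0, one_mul]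
    push_cast; ring
  have hμ1 : μ = 1 := by
    refine le_antisymm ((hμ.2 (1, 0) (by simp [Prod.ext_iff])).trans_eq hone) ?_
    obtain ⟨p, hp, he⟩ := hμ.1
    rw [← he]; exact hge p hp
  subst hμ1
  ext ⟨x, y⟩
  simp only [MinVecs, Set.mem_setOf_eq, Set.mem_insert_iff, Set.mem_singleton_iff,
    Prod.mk.injEq]
  constructor
  · intro h
    have hne : ¬(x = 0 ∧ ε * y = 0) := by
      rintro ⟨rfl, h0⟩
      have hy : y = 0 := by rcases hε with rfl | rfl <;> omega
      subst hy
      norm_num [trForm] at h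
    have hNn : n * x ^ 2 + (2 * n ^ 2 + r - 1) * x * (ε * y)
        + n * (n ^ 2 + r) * (ε * y) ^ 2 = n := by
      have h2 := htr x y
      rw [h, one_mul] at h2
      exact_mod_cast h2.symm
    have hm := (master_s12 n r x (ε * y) hn hr1 hr2 hne).2 hNn
    rcases hε with rfl | rfl <;> omega
  · rcases hε with rfl | rfl <;>
      · rintro (⟨rfl, rfl⟩ | ⟨rfl, rfl⟩ | ⟨rfl, rfl⟩ | ⟨rfl, rfl⟩) <;>
          · refine mul_right_cancel₀ hnq0 ?_
            rw [htr, one_mul]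
            push_cast; ring

lemma trForm_a1 (n r : ℤ) (hn : 0 < n) (hdpos : 0 < n ^ 2 + r) (x y : ℤ) :
    trForm (n ^ 2 + r)
        (1 / 2, (2 * (n : ℚ) ^ 2 + (r : ℚ) - 1) / (4 * (n : ℚ) * ((n : ℚ) ^ 2 + (r : ℚ)))) (x, y)
        * n
      = ((n * x ^ 2 + (2 * n ^ 2 + r - 1) * x * y + n * (n ^ 2 + r) * y ^ 2 : ℤ) : ℚ) := by
  have hn0 : (n : ℚ) ≠ 0 := Int.cast_ne_zero.2 hn.ne'
  have hd0 : ((n : ℚ) ^ 2 + (r : ℚ)) ≠ 0 := by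
    have : (0 : ℚ) < (n : ℚ) ^ 2 + (r : ℚ) := by exact_mod_cast hdpos
    exact this.ne'
  simp only [trForm]
  push_cast
  field_simp
  ring


lemma trForm_a2 (n r : ℤ) (hn : 0 < n) (hdpos : 0 < n ^ 2 + r) (x y : ℤ) :
    trForm (n ^ 2 + r)
        (1 / 2, -((2 * (n : ℚ) ^ 2 + (r : ℚ) - 1) / (4 * (n : ℚ) * ((n : ℚ) ^ 2 + (r : ℚ))))) (x, y)
        * n
      = ((n * x ^ 2 + (2 * n ^ 2 + r - 1) * x * (-y) + n * (n ^ 2 + r) * (-y) ^ 2 : ℤ) : ℚ) := by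
  have hn0 : (n : ℚ) ≠ 0 := Int.cast_ne_zero.2 hn.ne'
  have hd0 : ((n : ℚ) ^ 2 + (r : ℚ)) ≠ 0 := by
    have : (0 : ℚ) < (n : ℚ) ^ 2 + (r : ℚ) := by exact_mod_cast hdpos
    exact this.ne'
  simp only [trForm]
  push_cast
  field_simp
  ring

/-- for `d = n² + r` with `−(n−1) < r < n`, `r ≠ ±1`, one has
`M(a₁) = {±1, ±(n − √d)}` and `M(a₂) = {±1, ±(n + √d)}` exactly. -/
theorem statement12 (d n r : ℤ) (hd : d = n ^ 2 + r) (hdpos : 0 < d) (hsf : Squarefree d)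
    (hmod : d % 4 = 2 ∨ d % 4 = 3) (hn : 0 < n) (hr1 : -(n - 1) < r) (hr2 : r < n)
    (hrne1 : r ≠ 1) (hrnem1 : r ≠ -1) :
    let a₁ : QF := (1 / 2, (2 * (n : ℚ) ^ 2 + (r : ℚ) - 1) / (4 * (n : ℚ) * ((n : ℚ) ^ 2 + (r : ℚ))))
    let a₂ : QF := (1 / 2, -((2 * (n : ℚ) ^ 2 + (r : ℚ) - 1) / (4 * (n : ℚ) * ((n : ℚ) ^ 2 + (r : ℚ)))))
    (∀ μ : ℚ, IsMinOf d a₁ μ →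
        MinVecs d a₁ μ = ({(1, 0), (-1, 0), (n, -1), (-n, 1)} : Set (ℤ × ℤ))) ∧
      (∀ μ : ℚ, IsMinOf d a₂ μ →
        MinVecs d a₂ μ = ({(1, 0), (-1, 0), (n, 1), (-n, -1)} : Set (ℤ × ℤ))) := by
  subst hd
  intro a₁ a₂
  constructor
  · intro μ hμ
    have h := minvecs_eq n r hn hdpos hr1 hr2 a₁ 1 (Or.inl rfl)
      (fun x y => by simp only [one_mul]; exact trForm_a1 n r hn hdpos x y) μ hμ
    simpa using h
  · intro μ hμ
    have h := minvecs_eq n r hn hdpos hr1 hr2 a₂ (-1) (Or.inr rfl)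
      (fun x y => by simp only [neg_one_mul]; exact trForm_a2 n r hn hdpos x y) μ hμ
    simpa using h
end
end

section
/- Let d be a positive square-free integer with d ≡ 2 or 3 (mod 4), write d = n² + r with integers n > 0 and −n < r ≠ ±1 ≤ n, and suppose the fundamental unit of K = ℚ(√d) is α + β√d with β = m(m+2) for some odd integer m ≥ 3 and α ≡ ±((m−1)/2·(m+2)² + 1) (mod β²). Then for a₃ = α + β√d one has M(a₃) = {±(n − √d), ±(α − β√d)(n + √d)} exactly. -/
/-!
We model the real quadratic field `K = ℚ(√d)` concretely: an element
`a.1 + a.2·√d` is represented by its pair of rational coordinates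
`a : ℚ × ℚ`, and the ring of integers `O_K = ℤ[√d]` (for `d ≡ 2, 3 mod 4`)
by pairs of integers `x : ℤ × ℤ` representing `x.1 + x.2·√d`.
-/

noncomputable section

lemma one_le_sq' (s : ℤ) (h : s ≠ 0) : 1 ≤ s ^ 2 := by
  rcases h.lt_or_gt with h' | h' <;> nlinarith

lemma sq_sum_one (s t : ℤ) (h : s ^ 2 + t ^ 2 = 1) :
    (s = 1 ∧ t = 0) ∨ (s = -1 ∧ t = 0) ∨ (s = 0 ∧ t = 1) ∨ (s = 0 ∧ t = -1) := by
  have hs1 : -1 ≤ s := by nlinarith [sq_nonneg t, sq_nonneg (s + 1)]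
  have hs2 : s ≤ 1 := by nlinarith [sq_nonneg t, sq_nonneg (s - 1)]
  have ht1 : -1 ≤ t := by nlinarith [sq_nonneg s, sq_nonneg (t + 1)]
  have ht2 : t ≤ 1 := by nlinarith [sq_nonneg s, sq_nonneg (t - 1)]
  interval_cases s <;> interval_cases t <;> revert h <;> norm_num

lemma nr_unique (n N r R : ℤ) (hn : 0 < n) (hN : 0 < N) (h : n ^ 2 + r = N ^ 2 + R)
    (h1 : -n < r) (h2 : r ≤ n) (h3 : -N < R) (h4 : R ≤ N) : n = N := by
  by_contra hne
  rcases lt_or_gt_of_ne hne with hlt | hlt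
  · nlinarith [mul_nonneg (by linarith : (0:ℤ) ≤ N - n - 1) (by linarith : (0:ℤ) ≤ N + n)]
  · nlinarith [mul_nonneg (by linarith : (0:ℤ) ≤ n - N - 1) (by linarith : (0:ℤ) ≤ N + n)]

lemma quad_lt (aa r s t : ℤ) (h1 : 2 * r < aa) (h2 : -(2 * r) < aa) (h : 2 ≤ s ^ 2 + t ^ 2) :
    aa < aa * (s ^ 2 + t ^ 2) + -(2 * r) * (s * t) := by
  rcases le_or_gt 0 (s * t) with hst | hst
  · nlinarith [mul_le_mul_of_nonneg_right (by linarith : (1:ℤ) - aa ≤ -(2 * r)) hst,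
      mul_nonneg (by nlinarith [sq_nonneg (s - t)] : (0:ℤ) ≤ s ^ 2 + t ^ 2 - s * t - 1)
        (by linarith : (0:ℤ) ≤ aa - 1), sq_nonneg (s - t)]
  · nlinarith [mul_le_mul_of_nonpos_right (by linarith : -(2 * r) ≤ aa - 1) (le_of_lt hst),
      mul_nonneg (by nlinarith [sq_nonneg (s + t)] : (0:ℤ) ≤ s ^ 2 + t ^ 2 + s * t - 1)
        (by linarith : (0:ℤ) ≤ aa - 1), sq_nonneg (s + t)]

private lemma b15 (m β : ℤ) (hm : 3 ≤ m) (hβ : β = m * (m + 2)) : 15 ≤ β := by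
  rw [hβ]; nlinarith

private lemma alphagt (d m α β : ℤ) (hd1 : 0 < d) (hα0 : 0 < α) (hm : 3 ≤ m)
    (hβ : β = m * (m + 2)) (hd' : d * β ^ 2 = α ^ 2 - 1) : m + 1 < α := by
  have h15 : 15 ≤ β := b15 m β hm hβ
  nlinarith [mul_le_mul_of_nonneg_right (by linarith : (1:ℤ) ≤ d) (sq_nonneg β),
    mul_le_mul h15 h15 (by norm_num) (by linarith)]

private lemma npos (β N : ℤ) (hβ0 : 0 < β) (h : 0 < β * N) : 0 < N := by
  by_contra hcon
  push_neg at hcon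
  nlinarith [mul_nonneg hβ0.le (by linarith : (0:ℤ) ≤ -N)]

private lemma R0pos (β m N R : ℤ) (hβ0 : 0 < β) (hm : 3 ≤ m) (hN : 0 < N)
    (hrel : β * R = 2 * N * (m + 1) + 1) : 0 < R := by
  by_contra hcon
  push_neg at hcon
  nlinarith [mul_nonneg hβ0.le (by linarith : (0:ℤ) ≤ -R),
    mul_pos hN (by linarith : (0:ℤ) < m + 1)]

private lemma RleN (m N R : ℤ) (hm : 3 ≤ m) (hN : 0 < N)
    (hrel : m * (m + 2) * R = 2 * N * (m + 1) + 1) : R ≤ N := by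
  by_contra hcon
  push_neg at hcon
  nlinarith [mul_le_mul_of_nonneg_left (by linarith : N + 1 ≤ R)
      (by nlinarith : (0:ℤ) ≤ m * (m + 2)),
    mul_le_mul_of_nonneg_left (by linarith : (1:ℤ) ≤ N) (by nlinarith : (0:ℤ) ≤ m ^ 2 - 2)]

private lemma Rneg (β m N R : ℤ) (hβ0 : 0 < β) (hm : 3 ≤ m) (hN : 0 < N)
    (hrel : β * R = 1 - 2 * N * (m + 1)) : R < 0 := by
  by_contra hcon
  push_neg at hcon
  nlinarith [mul_nonneg hβ0.le hcon, mul_pos hN (by linarith : (0:ℤ) < m + 1)]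

private lemma Rgt (m N R : ℤ) (hm : 3 ≤ m) (hN : 0 < N)
    (hrel : m * (m + 2) * R = 1 - 2 * N * (m + 1)) : -N < R := by
  by_contra hcon
  push_neg at hcon
  nlinarith [mul_le_mul_of_nonneg_left (by linarith : R ≤ -N)
      (by nlinarith : (0:ℤ) ≤ m * (m + 2)),
    mul_le_mul_of_nonneg_left (by linarith : (1:ℤ) ≤ N) (by nlinarith : (0:ℤ) ≤ m ^ 2 - 2)]

private lemma posX1 (m n r : ℤ) (hm : 3 ≤ m) (hr : 1 ≤ r)
    (hrel : m * (m + 2) * r = 2 * n * (m + 1) + 1) : 0 < (m - 1) * r - n := by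
  have e6 : 2 * (m + 1) * ((m - 1) * r - n) = (m ^ 2 - 2 * m - 2) * r + 1 := by
    linear_combination hrel
  by_contra hcon
  push_neg at hcon
  nlinarith [e6,
    mul_nonneg (by nlinarith : (0:ℤ) ≤ m ^ 2 - 2 * m - 2) (by linarith : (0:ℤ) ≤ r - 1),
    mul_nonneg (by linarith : (0:ℤ) ≤ m + 1) (by linarith : (0:ℤ) ≤ -((m - 1) * r - n))]

private lemma posX2 (m n r : ℤ) (hm : 3 ≤ m) (hr : r ≤ -2)
    (hrel : m * (m + 2) * r = 1 - 2 * n * (m + 1)) : 0 < (m - 1) * (-r) - n := by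
  have e6 : 2 * (m + 1) * ((m - 1) * (-r) - n) = (m ^ 2 - 2 * m - 2) * (-r) - 1 := by
    linear_combination -hrel
  by_contra hcon
  push_neg at hcon
  nlinarith [e6,
    mul_nonneg (by nlinarith : (0:ℤ) ≤ m ^ 2 - 2 * m - 2) (by linarith : (0:ℤ) ≤ -r - 2),
    mul_nonneg (by linarith : (0:ℤ) ≤ m + 1) (by linarith : (0:ℤ) ≤ -((m - 1) * (-r) - n))]

private lemma sq_le_two_absurd (β : ℤ) (h15 : 15 ≤ β) (h : β ^ 2 ≤ 2) : False := by
  nlinarith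
lemma main_aux (d M n r α β aa w1 w2 : ℤ)
    (hβ : β = M * (M + 2))
    (hα : α = β * n + (M + 1))
    (hd : d = n ^ 2 + r)
    (hrel : M * (M + 2) * r = 2 * n * (M + 1) + 1)
    (haa : aa = (M + 1) * r - n)
    (hw1 : w1 = -(n * (M + 1) + 1))
    (hw2 : w2 = M + 1)
    (h1 : 2 * r < aa) (h2 : -(2 * r) < aa) :
    ∀ μ : ℚ, IsMinOf d ((α : ℚ), (β : ℚ)) μ →
      MinVecs d ((α : ℚ), (β : ℚ)) μ =
        ({(n, -1), (-n, 1), (w1, w2), (-w1, -w2)} : Set (ℤ × ℤ)) := by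
  intro μ hμ
  have haa0 : 0 < aa := by linarith
  have keyZ : ∀ x1 x2 : ℤ, α * (x1 ^ 2 + d * x2 ^ 2) + 2 * d * β * (x1 * x2)
      = aa * (((M + 1) * x1 + (n * (M + 1) + 1) * x2) ^ 2 + (x1 + n * x2) ^ 2)
        + -(2 * r) * (((M + 1) * x1 + (n * (M + 1) + 1) * x2) * (x1 + n * x2)) := by
    intro x1 x2
    linear_combination (x1 ^ 2 + d * x2 ^ 2) * hα
      + ((M + 1) * x2 ^ 2 + 2 * β * x1 * x2 + β * n * x2 ^ 2) * hd
      + (-(((M + 1) * x1 + (n * (M + 1) + 1) * x2) ^ 2 + (x1 + n * x2) ^ 2)) * haa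
      + (2 * r * x1 * x2 + n * x1 ^ 2 + n * r * x2 ^ 2 + 2 * n ^ 2 * x1 * x2 + n ^ 3 * x2 ^ 2) * hβ
      + (-((M + 1) * (x1 + n * x2) ^ 2 + n * x2 ^ 2)) * hrel
  have keyQ : ∀ x : ℤ × ℤ, trForm d ((α : ℚ), (β : ℚ)) x
      = ((2 * (aa * (((M + 1) * x.1 + (n * (M + 1) + 1) * x.2) ^ 2 + (x.1 + n * x.2) ^ 2)
        + -(2 * r) * (((M + 1) * x.1 + (n * (M + 1) + 1) * x.2) * (x.1 + n * x.2))) : ℤ) : ℚ) := by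
    intro x
    have h := congrArg (fun z : ℤ => (z : ℚ)) (keyZ x.1 x.2)
    push_cast at h
    show (2:ℚ) * ((α:ℚ) * ((x.1:ℚ) ^ 2 + (d:ℚ) * (x.2:ℚ) ^ 2)
        + 2 * (d:ℚ) * (β:ℚ) * (x.1:ℚ) * (x.2:ℚ)) = _
    push_cast
    linear_combination (2 : ℚ) * h
  have hquad_iff : ∀ s t : ℤ,
      (aa * (s ^ 2 + t ^ 2) + -(2 * r) * (s * t) = aa ↔ s ^ 2 + t ^ 2 = 1) := by
    intro s t
    constructor
    · intro h
      by_contra hne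
      rcases lt_or_ge (s ^ 2 + t ^ 2) 2 with hlt | hge
      · have h0 : 0 ≤ s ^ 2 + t ^ 2 := by positivity
        have hs0 : s ^ 2 = 0 := by
          rcases eq_or_ne s 0 with h' | h'
          · rw [h']; ring
          · exfalso; rcases eq_or_ne t 0 with h'' | h''
            · apply hne; rw [h'']
              have := one_le_sq' s h'; nlinarith
            · have := one_le_sq' s h'; have := one_le_sq' t h''; omega
        have ht0 : t ^ 2 = 0 := by omega
        rw [hs0, ht0] at h hne
        have hst : s * t = 0 := by
          have : s = 0 := by nlinarith [sq_nonneg s]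
          rw [this]; ring
        rw [hst] at h
        simp at h
        omega
      · exact absurd h (ne_of_gt (quad_lt aa r s t h1 h2 hge))
    · intro h
      rcases sq_sum_one s t h with ⟨hs, ht⟩ | ⟨hs, ht⟩ | ⟨hs, ht⟩ | ⟨hs, ht⟩ <;>
        subst hs <;> subst ht <;> ring
  obtain ⟨⟨x₀, hx₀ne, hx₀val⟩, hmin⟩ := hμ
  have hones : ∀ x : ℤ × ℤ, x ≠ 0 →
      1 ≤ ((M + 1) * x.1 + (n * (M + 1) + 1) * x.2) ^ 2 + (x.1 + n * x.2) ^ 2 := by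
    intro x hx
    have hnand : ¬((M + 1) * x.1 + (n * (M + 1) + 1) * x.2 = 0 ∧ x.1 + n * x.2 = 0) := by
      rintro ⟨hS, hT⟩
      apply hx
      have e2 : x.2 = 0 := by linear_combination hS - (M + 1) * hT
      have e1 : x.1 = 0 := by linear_combination hT - n * e2
      exact Prod.ext_iff.mpr ⟨e1, e2⟩
    rcases not_and_or.mp hnand with hS | hT
    · have := one_le_sq' _ hS
      nlinarith [sq_nonneg (x.1 + n * x.2)]
    · have := one_le_sq' _ hT
      nlinarith [sq_nonneg ((M + 1) * x.1 + (n * (M + 1) + 1) * x.2)]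
  have hle : μ ≤ ((2 * aa : ℤ) : ℚ) := by
    have h := hmin (n, -1) (by simp [Prod.ext_iff])
    have h2' : trForm d ((α : ℚ), (β : ℚ)) (n, -1)
        = ((2 * (aa * (((M + 1) * n + (n * (M + 1) + 1) * (-1)) ^ 2 + (n + n * (-1)) ^ 2)
          + -(2 * r) * (((M + 1) * n + (n * (M + 1) + 1) * (-1)) * (n + n * (-1)))) : ℤ) : ℚ) :=
      keyQ (n, -1)
    have h3 : (2 * (aa * (((M + 1) * n + (n * (M + 1) + 1) * (-1)) ^ 2 + (n + n * (-1)) ^ 2)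
          + -(2 * r) * (((M + 1) * n + (n * (M + 1) + 1) * (-1)) * (n + n * (-1)))) : ℤ)
        = 2 * aa := by ring
    rw [h2', h3] at h
    exact h
  have hge : ((2 * aa : ℤ) : ℚ) ≤ μ := by
    have hone := hones x₀ hx₀ne
    have hval : aa ≤ aa * (((M + 1) * x₀.1 + (n * (M + 1) + 1) * x₀.2) ^ 2 + (x₀.1 + n * x₀.2) ^ 2)
        + -(2 * r) * (((M + 1) * x₀.1 + (n * (M + 1) + 1) * x₀.2) * (x₀.1 + n * x₀.2)) := by
      rcases eq_or_lt_of_le hone with heq | hlt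
      · exact le_of_eq ((hquad_iff _ _).mpr heq.symm).symm
      · exact le_of_lt (quad_lt aa r _ _ h1 h2 (by omega))
    rw [keyQ x₀] at hx₀val
    rw [← hx₀val]
    exact_mod_cast (by linarith : (2 * aa : ℤ) ≤ 2 * (aa * (((M + 1) * x₀.1 + (n * (M + 1) + 1) * x₀.2) ^ 2 + (x₀.1 + n * x₀.2) ^ 2)
        + -(2 * r) * (((M + 1) * x₀.1 + (n * (M + 1) + 1) * x₀.2) * (x₀.1 + n * x₀.2))))
  have hμ2 : μ = ((2 * aa : ℤ) : ℚ) := le_antisymm hle hge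
  ext x
  simp only [MinVecs, Set.mem_setOf_eq, Set.mem_insert_iff, Set.mem_singleton_iff]
  rw [keyQ x, hμ2, Int.cast_inj]
  constructor
  · intro h
    have h' : aa * (((M + 1) * x.1 + (n * (M + 1) + 1) * x.2) ^ 2 + (x.1 + n * x.2) ^ 2)
        + -(2 * r) * (((M + 1) * x.1 + (n * (M + 1) + 1) * x.2) * (x.1 + n * x.2)) = aa := by
      linarith
    have hsum := (hquad_iff _ _).mp h'
    rcases sq_sum_one _ _ hsum with ⟨hS, hT⟩ | ⟨hS, hT⟩ | ⟨hS, hT⟩ | ⟨hS, hT⟩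
    · -- (1,0) : x = (-n, 1)
      right; left
      have e2 : x.2 = 1 := by linear_combination hS - (M + 1) * hT
      have e1 : x.1 = -n := by linear_combination hT - n * e2
      exact Prod.ext_iff.mpr ⟨e1, e2⟩
    · -- (-1,0) : x = (n, -1)
      left
      have e2 : x.2 = -1 := by linear_combination hS - (M + 1) * hT
      have e1 : x.1 = n := by linear_combination hT - n * e2
      exact Prod.ext_iff.mpr ⟨e1, e2⟩
    · -- (0,1) : x = (-w1, -w2)
      right; right; right
      have e2 : x.2 = -w2 := by linear_combination hS - (M + 1) * hT + hw2
      have e1 : x.1 = -w1 := by linear_combination hT - n * e2 + hw1 + n * hw2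
      exact Prod.ext_iff.mpr ⟨e1, e2⟩
    · -- (0,-1) : x = (w1, w2)
      right; right; left
      have e2 : x.2 = w2 := by linear_combination hS - (M + 1) * hT - hw2
      have e1 : x.1 = w1 := by linear_combination hT - n * e2 - hw1 - n * hw2
      exact Prod.ext_iff.mpr ⟨e1, e2⟩
  · intro h
    rcases h with h | h | h | h
    · have hx1 : x.1 = n := by rw [h]
      have hx2 : x.2 = -1 := by rw [h]
      have hS : (M + 1) * x.1 + (n * (M + 1) + 1) * x.2 = -1 := by rw [hx1, hx2]; ring
      have hT : x.1 + n * x.2 = 0 := by rw [hx1, hx2]; ring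
      rw [hS, hT]; ring
    · have hx1 : x.1 = -n := by rw [h]
      have hx2 : x.2 = 1 := by rw [h]
      have hS : (M + 1) * x.1 + (n * (M + 1) + 1) * x.2 = 1 := by rw [hx1, hx2]; ring
      have hT : x.1 + n * x.2 = 0 := by rw [hx1, hx2]; ring
      rw [hS, hT]; ring
    · have hx1 : x.1 = w1 := by rw [h]
      have hx2 : x.2 = w2 := by rw [h]
      have hS : (M + 1) * x.1 + (n * (M + 1) + 1) * x.2 = 0 := by
        rw [hx1, hx2, hw1, hw2]; ring
      have hT : x.1 + n * x.2 = -1 := by rw [hx1, hx2, hw1, hw2]; ring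
      rw [hS, hT]; ring
    · have hx1 : x.1 = -w1 := by rw [h]
      have hx2 : x.2 = -w2 := by rw [h]
      have hS : (M + 1) * x.1 + (n * (M + 1) + 1) * x.2 = 0 := by
        rw [hx1, hx2, hw1, hw2]; ring
      have hT : x.1 + n * x.2 = 1 := by rw [hx1, hx2, hw1, hw2]; ring
      rw [hS, hT]; ring

set_option maxHeartbeats 1000000 in
/-- under the hypotheses of the main theorem, for `a₃ = α + β√d`
one has `M(a₃) = {±(n − √d), ±(α − β√d)(n + √d)}` exactly.
Here `(α − β√d)(n + √d) = (αn − βd) + (α − βn)√d`. -/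
theorem statement13 (d n r : ℤ) (hd : d = n ^ 2 + r) (hdpos : 0 < d) (hsf : Squarefree d)
    (hmod : d % 4 = 2 ∨ d % 4 = 3) (hn : 0 < n) (hr1 : -n < r) (hr2 : r ≤ n)
    (hrne1 : r ≠ 1) (hrnem1 : r ≠ -1)
    (m α β : ℤ) (hm : 3 ≤ m) (hmodd : Odd m) (hβ : β = m * (m + 2))
    (hfund : IsFundUnit d α β)
    (hcong : α ≡ (m - 1) / 2 * (m + 2) ^ 2 + 1 [ZMOD β ^ 2] ∨
      α ≡ -((m - 1) / 2 * (m + 2) ^ 2 + 1) [ZMOD β ^ 2]) :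
    let a₃ : QF := ((α : ℚ), (β : ℚ))
    ∀ μ : ℚ, IsMinOf d a₃ μ →
      MinVecs d a₃ μ =
        ({(n, -1), (-n, 1), (α * n - β * d, α - β * n),
          (-(α * n - β * d), -(α - β * n))} : Set (ℤ × ℤ)) := by
  intro a₃ μ hμ
  obtain ⟨hα0, hβ0, hu, -⟩ := hfund
  have hu' : α ^ 2 - d * β ^ 2 = 1 ∨ α ^ 2 - d * β ^ 2 = -1 := hu
  obtain ⟨k, hk⟩ := hmodd
  have hk1 : 1 ≤ k := by omega
  have hβ15 : 15 ≤ β := b15 m β hm hβ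
  have hAdef : (m - 1) / 2 * (m + 2) ^ 2 + 1 = k * (m + 2) ^ 2 + 1 := by
    have h' : (m - 1) / 2 = k := by omega
    rw [h']
  have hA1 : (k * (m + 2) ^ 2 + 1) ^ 2 - 1 = β ^ 2 * (k * (k + 2)) := by
    rw [hβ, hk]; ring
  have hA2 : ((k * (m + 2) ^ 2 + 1) ^ 2 : ℤ) ≡ 1 [ZMOD β ^ 2] :=
    (Int.modEq_iff_dvd.mpr ⟨k * (k + 2), hA1⟩).symm
  have h0 : (d * β ^ 2 : ℤ) ≡ 0 [ZMOD β ^ 2] := Int.modEq_zero_iff_dvd.mpr ⟨d, by ring⟩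
  have hβdvd : (β : ℤ) ∣ β ^ 2 := ⟨β, by ring⟩
  rcases hcong with hc | hc
  · -- σ = +1 : α ≡ A, use M = -m-2
    rw [hAdef] at hc
    have hα2 : α ^ 2 ≡ 1 [ZMOD β ^ 2] := (hc.pow 2).trans hA2
    have hnorm : α ^ 2 - d * β ^ 2 = 1 := by
      rcases hu' with h | h
      · exact h
      · exfalso
        have h3 := hα2.sub h0
        rw [h] at h3
        have h4 := h3.dvd
        have h5 : (β ^ 2 : ℤ) ∣ 2 := by
          have h6 : ((1 : ℤ) - 0) - (-1) = 2 := by norm_num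
          rwa [h6] at h4
        exact sq_le_two_absurd β hβ15 (Int.le_of_dvd (by norm_num) h5)
    have hd' : d * β ^ 2 = α ^ 2 - 1 := by linarith
    have hcβ := hc.of_dvd hβdvd
    have hstep : ((k * (m + 2) ^ 2 + 1) : ℤ) ≡ -(m + 1) [ZMOD β] :=
      Int.modEq_iff_dvd.mpr ⟨-(k + 1), by rw [hβ, hk]; ring⟩
    have hc2 := hcβ.trans hstep
    obtain ⟨N', hN'⟩ := hc2.dvd
    obtain ⟨N, hN⟩ : ∃ N, α = β * N - (m + 1) := ⟨-N', by linear_combination -hN'⟩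
    have hβNpos : 0 < β * N := by linarith
    have hNpos : 0 < N := npos β N hβ0 hβNpos
    have hrel' : β * (d - N ^ 2) = 1 - 2 * N * (m + 1) := by
      have hcan : β * (β * (d - N ^ 2)) = β * (1 - 2 * N * (m + 1)) := by
        linear_combination hd' + (α + β * N - (m + 1)) * hN - hβ
      exact mul_left_cancel₀ hβ0.ne' hcan
    have hrelm0 : m * (m + 2) * (d - N ^ 2) = 1 - 2 * N * (m + 1) := by
      rw [← hβ]; exact hrel'
    have hRneg : d - N ^ 2 < 0 := Rneg β m N _ hβ0 hm hNpos hrel'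
    have hRgt : -N < d - N ^ 2 := Rgt m N _ hm hNpos hrelm0
    have hnN : n = N := nr_unique n N r (d - N ^ 2) hn hNpos (by linarith) hr1 hr2 hRgt
      (by linarith)
    rw [← hnN] at hN hrel' hRneg
    have h5 : d - n ^ 2 = r := by linarith
    rw [h5] at hrel'
    have hrneg : r < 0 := by linarith
    have hrle : r ≤ -2 := by omega
    have hrelm : m * (m + 2) * r = 1 - 2 * n * (m + 1) := by rw [← hβ]; exact hrel'
    have hrelM : (-m - 2) * (-m - 2 + 2) * r = 2 * n * (-m - 2 + 1) + 1 := by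
      linear_combination hrelm
    have hαM : α = β * n + (-m - 2 + 1) := by linear_combination hN
    have h2' : 0 < (m - 1) * (-r) - n := posX2 m n r hm hrle hrelm
    have h2aux : -(2 * r) < (-m - 2 + 1) * r - n := by linarith
    have h1aux : 2 * r < (-m - 2 + 1) * r - n := by linarith
    have hw1 : α * n - β * d = -(n * (-m - 2 + 1) + 1) := by
      linear_combination n * hN - β * hd - hrel'
    have hw2 : α - β * n = -m - 2 + 1 := by linear_combination hN
    exact main_aux d (-m - 2) n r α β ((-m - 2 + 1) * r - n) (α * n - β * d) (α - β * n)
      (by linear_combination hβ) hαM hd hrelM rfl hw1 hw2 h1aux h2aux μ hμ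
  · -- σ = -1 : α ≡ -A, use M = m
    rw [hAdef] at hc
    have hsq : ((-(k * (m + 2) ^ 2 + 1)) ^ 2 : ℤ) = (k * (m + 2) ^ 2 + 1) ^ 2 := by ring
    have hα2 : α ^ 2 ≡ 1 [ZMOD β ^ 2] := (hsq ▸ (hc.pow 2)).trans hA2
    have hnorm : α ^ 2 - d * β ^ 2 = 1 := by
      rcases hu' with h | h
      · exact h
      · exfalso
        have h3 := hα2.sub h0
        rw [h] at h3
        have h4 := h3.dvd
        have h5 : (β ^ 2 : ℤ) ∣ 2 := by
          have h6 : ((1 : ℤ) - 0) - (-1) = 2 := by norm_num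
          rwa [h6] at h4
        exact sq_le_two_absurd β hβ15 (Int.le_of_dvd (by norm_num) h5)
    have hd' : d * β ^ 2 = α ^ 2 - 1 := by linarith
    have hαgt : m + 1 < α := alphagt d m α β hdpos hα0 hm hβ hd'
    have hcβ := hc.of_dvd hβdvd
    have hstep : (-(k * (m + 2) ^ 2 + 1) : ℤ) ≡ m + 1 [ZMOD β] :=
      Int.modEq_iff_dvd.mpr ⟨k + 1, by rw [hβ, hk]; ring⟩
    have hc2 := hcβ.trans hstep
    obtain ⟨N', hN'⟩ := hc2.dvd
    obtain ⟨N, hN⟩ : ∃ N, α = β * N + (m + 1) := ⟨-N', by linear_combination -hN'⟩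
    have hβNpos : 0 < β * N := by linarith
    have hNpos : 0 < N := npos β N hβ0 hβNpos
    have hrel' : β * (d - N ^ 2) = 2 * N * (m + 1) + 1 := by
      have hcan : β * (β * (d - N ^ 2)) = β * (2 * N * (m + 1) + 1) := by
        linear_combination hd' + (α + β * N + (m + 1)) * hN - hβ
      exact mul_left_cancel₀ hβ0.ne' hcan
    have hrelm0 : m * (m + 2) * (d - N ^ 2) = 2 * N * (m + 1) + 1 := by
      rw [← hβ]; exact hrel'
    have hR0 : 0 < d - N ^ 2 := R0pos β m N _ hβ0 hm hNpos hrel'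
    have hRN : d - N ^ 2 ≤ N := RleN m N _ hm hNpos hrelm0
    have hnN : n = N := nr_unique n N r (d - N ^ 2) hn hNpos (by linarith) hr1 hr2
      (by linarith) hRN
    rw [← hnN] at hN hrel' hR0
    have h5 : d - n ^ 2 = r := by linarith
    rw [h5] at hrel'
    have hr0 : 0 < r := by linarith
    have hrelM : m * (m + 2) * r = 2 * n * (m + 1) + 1 := by rw [← hβ]; exact hrel'
    have h2' : 0 < (m - 1) * r - n := posX1 m n r hm (by linarith) hrelM
    have h1aux : 2 * r < (m + 1) * r - n := by linarith
    have h2aux : -(2 * r) < (m + 1) * r - n := by linarith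
    have hw1 : α * n - β * d = -(n * (m + 1) + 1) := by
      linear_combination n * hN - β * hd - hrel'
    have hw2 : α - β * n = m + 1 := by linear_combination hN
    exact main_aux d m n r α β ((m + 1) * r - n) (α * n - β * d) (α - β * n)
      hβ hN hd hrelM rfl hw1 hw2 h1aux h2aux μ hμ
end
end

section
/- Let d be a positive square-free integer with d ≡ 2 or 3 (mod 4), d = n² + r with integers n > 0 and −n < r ≠ ±1 ≤ n, and suppose the fundamental unit of K = ℚ(√d) is α + β√d with β = m(m+2) for some odd integer m ≥ 3 and α ≡ ±((m−1)/2·(m+2)² + 1) (mod β²). Let a₁ = 1/2 + ((2n²+r−1)/(4n(n²+r)))√d, a₂ = 1/2 − ((2n²+r−1)/(4n(n²+r)))√d, a₃ = α + β√d. Then a₁, a₂, a₃ lie in pairwise distinct classes: for no i ≠ j do there exist λ ∈ ℚ with λ > 0 and a unit u ∈ O_K^× such that aᵢ = λ·aⱼ·u². -/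
/-!
We model the real quadratic field `K = ℚ(√d)` concretely: an element
`a.1 + a.2·√d` is represented by its pair of rational coordinates
`a : ℚ × ℚ`, and the ring of integers `O_K = ℤ[√d]` (for `d ≡ 2, 3 mod 4`)
by pairs of integers `x : ℤ × ℤ` representing `x.1 + x.2·√d`.
-/

noncomputable section

namespace St15

def Nm (d : ℤ) (a : QF) : ℚ := a.1^2 - d * a.2^2

lemma Nm_qmul (d : ℤ) (a b : QF) : Nm d (qmul d a b) = Nm d a * Nm d b := by
  simp only [Nm, qmul]; ring

lemma Nm_smul (d : ℤ) (lam : ℚ) (a : QF) : Nm d (lam • a) = lam^2 * Nm d a := by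
  simp only [Nm, Prod.smul_fst, Prod.smul_snd, smul_eq_mul]; ring

lemma emb_qmul (d : ℤ) (hd : 0 ≤ d) (a b : QF) :
    emb d (qmul d a b) = emb d a * emb d b := by
  have h : Real.sqrt d * Real.sqrt d = (d:ℝ) := Real.mul_self_sqrt (by exact_mod_cast hd)
  simp only [emb, qmul]
  push_cast
  linear_combination (-(a.2 : ℝ)) * (b.2 : ℝ) * h

lemma emb_smul (d : ℤ) (lam : ℚ) (a : QF) : emb d (lam • a) = lam * emb d a := by
  simp only [emb, Prod.smul_fst, Prod.smul_snd, smul_eq_mul]; push_cast; ring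

lemma emb_ofInt (d : ℤ) (u : ℤ × ℤ) :
    emb d (ofInt u) = (u.1 : ℝ) + (u.2 : ℝ) * Real.sqrt (d : ℝ) := by
  simp [emb, ofInt]

lemma unit_prod (d : ℤ) (hd : 0 ≤ d) (u : ℤ × ℤ) :
    emb d (ofInt u) * emb d (ofInt (u.1, -u.2)) = ((u.1 ^ 2 - d * u.2 ^ 2 : ℤ) : ℝ) := by
  have h : Real.sqrt d * Real.sqrt d = (d:ℝ) := Real.mul_self_sqrt (by exact_mod_cast hd)
  simp only [emb_ofInt]
  push_cast
  linear_combination (-(u.2:ℝ)) * (u.2:ℝ) * h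

lemma unit_emb_sq_pos (d : ℤ) (hd : 0 ≤ d) (u : ℤ × ℤ) (hu : IsUnitPair d u) :
    0 < (emb d (ofInt u))^2 := by
  have h := unit_prod d hd u
  have hne : emb d (ofInt u) ≠ 0 := by
    intro h0
    rcases hu with hu | hu <;> rw [hu] at h <;> rw [h0] at h <;> norm_num at h
  positivity

lemma neg_unitPair (d : ℤ) (u : ℤ × ℤ) (hu : IsUnitPair d u) : IsUnitPair d (-u.1, -u.2) := by
  rcases hu with hu | hu
  · left; simpa [neg_pow] using hu
  · right; simpa [neg_pow] using hu

lemma conj_unitPair (d : ℤ) (u : ℤ × ℤ) (hu : IsUnitPair d u) : IsUnitPair d (u.1, -u.2) := by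
  rcases hu with hu | hu
  · left; simpa [neg_pow] using hu
  · right; simpa [neg_pow] using hu

lemma fund_lower (d α β : ℤ) (hfund : IsFundUnit d α β) (u : ℤ × ℤ) (hu : IsUnitPair d u)
    (h1 : 1 < (emb d (ofInt u))^2) :
    ((α:ℝ) + (β:ℝ) * Real.sqrt (d:ℝ))^2 ≤ (emb d (ofInt u))^2 := by
  set E := emb d (ofInt u) with hE
  set F := (α:ℝ) + (β:ℝ) * Real.sqrt (d:ℝ) with hF
  have hα : (1:ℝ) ≤ (α:ℝ) := by exact_mod_cast hfund.1
  have hβ : (0:ℝ) ≤ (β:ℝ) := by exact_mod_cast hfund.2.1.le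
  have hs : (0:ℝ) ≤ Real.sqrt (d:ℝ) := Real.sqrt_nonneg _
  have hF1 : 1 ≤ F := by rw [hF]; nlinarith
  have habs : 1 < |E| := by
    rw [← Real.sqrt_one, ← Real.sqrt_sq_eq_abs]
    exact Real.sqrt_lt_sqrt (by norm_num) h1
  rcases abs_cases E with ⟨he, _⟩ | ⟨he, _⟩
  · have : F ≤ E := by
      have := hfund.2.2.2 u hu (by rw [← emb_ofInt, ← hE, ← he]; exact habs)
      rw [← emb_ofInt d u, ← hE] at this; rw [hF]; linarith [he ▸ this]
    nlinarith
  · have hgt : 1 < (-u.1 : ℝ) + (-u.2 : ℝ) * Real.sqrt (d:ℝ) := by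
      have : emb d (ofInt (-u.1, -u.2)) = -E := by
        simp [emb_ofInt, hE]; ring
      calc (1:ℝ) < |E| := habs
      _ = -E := he
      _ = _ := by rw [← this, emb_ofInt]; push_cast; ring_nf
    have := hfund.2.2.2 (-u.1, -u.2) (neg_unitPair d u hu) (by push_cast; exact hgt)
    have hFle : F ≤ -E := by
      rw [hF]
      calc (α:ℝ) + β * Real.sqrt d ≤ (-u.1 : ℝ) + (-u.2 : ℝ) * Real.sqrt d := by push_cast at this ⊢; exact this
      _ = -E := by rw [hE, emb_ofInt]; push_cast; ring
    nlinarith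

lemma fund_upper (d α β : ℤ) (hd : 0 ≤ d) (hfund : IsFundUnit d α β) (u : ℤ × ℤ)
    (hu : IsUnitPair d u) (h1 : (emb d (ofInt u))^2 < 1) :
    ((α:ℝ) + (β:ℝ) * Real.sqrt (d:ℝ))^2 * (emb d (ofInt u))^2 ≤ 1 := by
  set E := emb d (ofInt u) with hE
  set E' := emb d (ofInt (u.1, -u.2)) with hE'
  have hprod : E * E' = ((u.1 ^ 2 - d * u.2 ^ 2 : ℤ) : ℝ) := unit_prod d hd u
  have hsq : E^2 * E'^2 = 1 := by
    have : (E * E')^2 = 1 := by rcases hu with h | h <;> rw [h] at hprod <;> rw [hprod] <;> norm_num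
    nlinarith [this]
  have hEpos : 0 < E^2 := unit_emb_sq_pos d hd u hu
  have hE'big : 1 < E'^2 := by nlinarith
  have := fund_lower d α β hfund (u.1, -u.2) (conj_unitPair d u hu) (by rw [← hE']; exact hE'big)
  rw [← hE'] at this
  nlinarith [sq_nonneg ((α:ℝ) + (β:ℝ) * Real.sqrt (d:ℝ))]

lemma noSquare (n r p : ℤ) (hn : 1 ≤ n) (h1 : 1 - n ≤ r) (h2 : r ≤ n) (hrm1 : r ≠ -1)
    (hp : 1 ≤ p) : p^2 * (n^2 + r) ≠ 4*n^2 - (r-1)^2 := by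
  intro heq
  have hkey : (n - r) * (n + r - 1) ≥ 0 := mul_nonneg (by omega) (by omega)
  rcases lt_or_ge p 3 with h3 | h3
  · interval_cases p
    · nlinarith
    · have h0 : (r + 1)^2 = 0 := by linear_combination heq
      have : r + 1 = 0 := by
        exact pow_eq_zero_iff (by norm_num) |>.mp h0
      omega
  · have hd1 : 1 ≤ n^2 + r := by nlinarith
    nlinarith [sq_nonneg p, mul_le_mul_of_nonneg_right (by nlinarith : (9:ℤ) ≤ p^2)
      (by omega : (0:ℤ) ≤ n^2+r)]

lemma ratlemma (d n r : ℤ) (hd : d = n^2 + r) (hsf : Squarefree d) (hn : 1 ≤ n)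
    (h1 : 1 - n ≤ r) (h2 : r ≤ n) (hrm1 : r ≠ -1) (lam : ℚ) (hlam : 0 < lam)
    (heq : lam^2 * (16 * (n:ℚ)^2 * (d:ℚ)) = 4*(n:ℚ)^2 - ((r:ℚ)-1)^2) : False := by
  set μ : ℚ := 4 * n * lam with hμ
  have hn0 : ((n:ℚ)) ≠ 0 := Int.cast_ne_zero.mpr (by omega)
  have hμpos : 0 < μ := by
    have : (0:ℚ) < (n:ℚ) := by exact_mod_cast (by omega : (0:ℤ) < n)
    positivity
  have hμeq : μ^2 * (d:ℚ) = 4*(n:ℚ)^2 - ((r:ℚ)-1)^2 := by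
    rw [hμ]; ring_nf; ring_nf at heq; linarith [heq]
  have hden : (μ.den : ℚ) ≠ 0 := by positivity
  have hnum : (μ.num : ℚ) = μ * (μ.den : ℚ) := by
    have h := Rat.num_div_den μ
    rw [div_eq_iff hden] at h
    exact h
  have hq : (μ.num : ℚ)^2 * (d:ℚ) = (4*(n:ℚ)^2 - ((r:ℚ)-1)^2) * (μ.den:ℚ)^2 := by
    rw [hnum]; rw [← hμeq]; ring
  have hZ : μ.num^2 * d = (4*n^2 - (r-1)^2) * (μ.den : ℤ)^2 := by exact_mod_cast hq
  have hdvd : ((μ.den : ℤ))^2 ∣ μ.num^2 * d := ⟨4*n^2 - (r-1)^2, by linarith [hZ]⟩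
  have hcop : IsCoprime (μ.num) ((μ.den : ℤ)) := by
    rw [Int.isCoprime_iff_gcd_eq_one]
    exact μ.reduced
  have hdvd2 : ((μ.den : ℤ))^2 ∣ d := by
    have := (hcop.symm.pow (n := 2) (m := 2)).dvd_of_dvd_mul_left (by rwa [mul_comm] at hdvd)
    exact this
  have hden1 : (μ.den : ℤ) = 1 := by
    have := hsf (μ.den : ℤ) (by rwa [← sq])
    rcases Int.isUnit_iff.mp this with h | h
    · exact h
    · exfalso
      have hpos : 0 < (μ.den:ℤ) := by exact_mod_cast μ.pos
      omega
  have hden1' : μ.den = 1 := by exact_mod_cast hden1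
  have hμint : (μ.num : ℚ) = μ := by
    rw [hnum, hden1']; push_cast; ring
  have hppos : 1 ≤ μ.num := by
    have : (0:ℚ) < (μ.num:ℚ) := by rw [hμint]; exact hμpos
    exact_mod_cast this
  have hfin : μ.num^2 * (n^2 + r) = 4*n^2 - (r-1)^2 := by
    have : (μ.num:ℚ)^2 * (d:ℚ) = 4*(n:ℚ)^2 - ((r:ℚ)-1)^2 := by rw [hμint]; exact hμeq
    rw [hd] at this; exact_mod_cast this
  exact noSquare n r μ.num hn h1 h2 hrm1 hppos hfin

lemma intIneq (n r : ℤ) (hn : 1 ≤ n) (h1 : 1 - n ≤ r) (h2 : r ≤ n) :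
    (2*n*(n^2+r) + (2*n^2+r-1)*(n+1))^2 < 225*(n^2+r)^2*(4*n^2 - (r-1)^2) := by
  have hA : 2*n*(n^2+r) + (2*n^2+r-1)*(n+1) ≤ 9*n^3 := by nlinarith [sq_nonneg (n-1), mul_nonneg (mul_nonneg (by omega : (0:ℤ) ≤ n-1) (by omega : (0:ℤ) ≤ n)) (by omega : (0:ℤ) ≤ n)]
  have hApos : 0 < 2*n*(n^2+r) + (2*n^2+r-1)*(n+1) := by nlinarith
  have hdlb : n^2 - n + 1 ≤ n^2 + r := by omega
  have hPlb : 3*n^2 ≤ 4*n^2 - (r-1)^2 := by nlinarith [mul_nonneg (by omega : (0:ℤ) ≤ n - (r-1)) (by omega : (0:ℤ) ≤ n + (r-1))]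
  have hB : 81*n^6 < 225*(n^2+r)^2*(4*n^2 - (r-1)^2) := by
    have h6 : 675*(n^2-n+1)^2*n^2 ≤ 225*(n^2+r)^2*(4*n^2 - (r-1)^2) := by
      have hq1 : (n^2-n+1)^2 ≤ (n^2+r)^2 := by nlinarith
      nlinarith [mul_le_mul hq1 hPlb (by positivity) (by positivity)]
    nlinarith [sq_nonneg (n-1), sq_nonneg (n*(n-1)), pow_pos (by omega : (0:ℤ) < n) 6]
  nlinarith [hA, hApos, hB]

end St15

open St15
set_option maxHeartbeats 4000000
/-- under the hypotheses of the main theorem, the forms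
`a₁ x², a₂ x², a₃ x²` lie in pairwise distinct classes: for no `i ≠ j` is
`aᵢ = λ · aⱼ · u²` with `λ ∈ ℚ`, `λ > 0` and `u` a unit of `O_K`. -/
theorem statement15 (d n r : ℤ) (hd : d = n ^ 2 + r) (hdpos : 0 < d) (hsf : Squarefree d)
    (hmod : d % 4 = 2 ∨ d % 4 = 3) (hn : 0 < n) (hr1 : -n < r) (hr2 : r ≤ n)
    (hrne1 : r ≠ 1) (hrnem1 : r ≠ -1)
    (m α β : ℤ) (hm : 3 ≤ m) (hmodd : Odd m) (hβ : β = m * (m + 2))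
    (hfund : IsFundUnit d α β)
    (hcong : α ≡ (m - 1) / 2 * (m + 2) ^ 2 + 1 [ZMOD β ^ 2] ∨
      α ≡ -((m - 1) / 2 * (m + 2) ^ 2 + 1) [ZMOD β ^ 2]) :
    let a₁ : QF := (1 / 2, (2 * (n : ℚ) ^ 2 + (r : ℚ) - 1) / (4 * (n : ℚ) * ((n : ℚ) ^ 2 + (r : ℚ))))
    let a₂ : QF := (1 / 2, -((2 * (n : ℚ) ^ 2 + (r : ℚ) - 1) / (4 * (n : ℚ) * ((n : ℚ) ^ 2 + (r : ℚ)))))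
    let a₃ : QF := ((α : ℚ), (β : ℚ))
    ¬ SameClass d a₁ a₂ ∧ ¬ SameClass d a₂ a₁ ∧
      ¬ SameClass d a₁ a₃ ∧ ¬ SameClass d a₃ a₁ ∧
      ¬ SameClass d a₂ a₃ ∧ ¬ SameClass d a₃ a₂ := by
  intro a₁ a₂ a₃
  have hd0 : (0:ℤ) ≤ d := hdpos.le
  have hn1 : 1 ≤ n := hn
  have hrlb : 1 - n ≤ r := by omega
  set X : ℚ := (2 * (n : ℚ) ^ 2 + (r : ℚ) - 1) / (4 * (n : ℚ) * ((n : ℚ) ^ 2 + (r : ℚ))) with hXdef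
  have ha1 : a₁ = (1/2, X) := rfl
  have ha2 : a₂ = (1/2, -X) := rfl
  have ha3 : a₃ = ((α : ℚ), (β : ℚ)) := rfl
  rw [ha1, ha2, ha3]
  set s : ℝ := Real.sqrt (d:ℝ) with hs
  have hss : s * s = (d:ℝ) := Real.mul_self_sqrt (by exact_mod_cast hd0)
  have hspos : 0 < s := Real.sqrt_pos.mpr (by exact_mod_cast hdpos)
  have hβ15 : 15 ≤ β := by nlinarith [hβ, hm]
  have hα1 : 1 ≤ α := hfund.1
  have hαR : (1:ℝ) ≤ (α:ℝ) := by exact_mod_cast hα1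
  have hβR : (15:ℝ) ≤ (β:ℝ) := by exact_mod_cast hβ15
  set F : ℝ := (α:ℝ) + (β:ℝ) * s with hF
  have hFpos : 0 < F := by rw [hF]; nlinarith
  have hF2 : 225 * (d:ℝ) ≤ F^2 := by
    have hF15 : 15*s ≤ F := by rw [hF]; nlinarith
    have h2 := mul_self_le_mul_self (by positivity : (0:ℝ) ≤ 15*s) hF15
    nlinarith [h2, hss]
  set S : ℤ := 2*n^2 + r - 1 with hSdef
  set P : ℤ := 4*n^2 - (r-1)^2 with hPdef
  have hident : S^2 + P = 4*n^2*d := by rw [hSdef, hPdef, hd]; ring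
  have hSpos : 0 < S := by rw [hSdef]; nlinarith
  have hPlb : 3*n^2 ≤ P := by
    rw [hPdef]
    nlinarith [mul_nonneg (by omega : (0:ℤ) ≤ n - (r-1)) (by omega : (0:ℤ) ≤ n + (r-1))]
  have hPpos : 0 < P := by nlinarith
  -- positivity of real quantities
  have hnR : (1:ℝ) ≤ (n:ℝ) := by exact_mod_cast hn1
  have hdR : (1:ℝ) ≤ (d:ℝ) := by exact_mod_cast hdpos
  have hSR : (1:ℝ) ≤ (S:ℝ) := by exact_mod_cast hSpos
  have hPR : (1:ℝ) ≤ (P:ℝ) := by exact_mod_cast hPpos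
  have hpos1 : (0:ℝ) < 2*(n:ℝ)*(d:ℝ) + (S:ℝ)*s := by nlinarith
  have hprodid : (2*(n:ℝ)*(d:ℝ) + (S:ℝ)*s) * (2*(n:ℝ)*(d:ℝ) - (S:ℝ)*s) = (d:ℝ) * (P:ℝ) := by
    have hiR : (S:ℝ)^2 + (P:ℝ) = 4*(n:ℝ)^2*(d:ℝ) := by exact_mod_cast hident
    linear_combination (-(d:ℝ)) * hiR + (-(S:ℝ)^2) * hss
  have hpos2 : (0:ℝ) < 2*(n:ℝ)*(d:ℝ) - (S:ℝ)*s := by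
    nlinarith [hprodid, hpos1, hdR, hPR]
  have hslt : s < (n:ℝ) + 1 := by
    have hdle : (d:ℝ) ≤ (n:ℝ)^2 + (n:ℝ) := by exact_mod_cast (by omega : d ≤ n^2 + n)
    nlinarith [hss, hspos]
  -- the key real inequality
  have hKI : 2*(n:ℝ)*(d:ℝ) + (S:ℝ)*s < F^2 * (2*(n:ℝ)*(d:ℝ) - (S:ℝ)*s) := by
    have hint := intIneq n r hn1 hrlb hr2
    have hintR : (2*(n:ℝ)*(d:ℝ) + (S:ℝ)*((n:ℝ)+1))^2 < 225*(d:ℝ)^2*(P:ℝ) := by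
      have : ((2*n*(n^2+r) + (2*n^2+r-1)*(n+1))^2 : ℝ) < ((225*(n^2+r)^2*(4*n^2 - (r-1)^2)):ℝ) := by
        exact_mod_cast hint
      rw [hSdef, hPdef, hd]; push_cast; push_cast at this; nlinarith [this]
    have hT : 2*(n:ℝ)*(d:ℝ) + (S:ℝ)*s ≤ 2*(n:ℝ)*(d:ℝ) + (S:ℝ)*((n:ℝ)+1) := by nlinarith
    have key : (2*(n:ℝ)*(d:ℝ) + (S:ℝ)*s)^2 < F^2 * ((2*(n:ℝ)*(d:ℝ) + (S:ℝ)*s) * (2*(n:ℝ)*(d:ℝ) - (S:ℝ)*s)) := by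
      rw [hprodid]
      have h1 : (2*(n:ℝ)*(d:ℝ) + (S:ℝ)*s)^2 < 225*(d:ℝ)^2*(P:ℝ) := by nlinarith [hT, hpos1, hintR]
      have h2 : 225*(d:ℝ)^2*(P:ℝ) ≤ F^2 * ((d:ℝ)*(P:ℝ)) := by nlinarith [hF2, hdR, hPR]
      linarith
    nlinarith [key, hpos1]
  -- rational facts
  have hnQ : ((n:ℚ)) ≠ 0 := Int.cast_ne_zero.mpr (by omega)
  have hdQcast : ((d:ℚ)) = (n:ℚ)^2 + (r:ℚ) := by exact_mod_cast congrArg (fun z : ℤ => (z:ℚ)) hd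
  have hdQpos : (0:ℚ) < (d:ℚ) := by exact_mod_cast hdpos
  have hdQ : ((n:ℚ)^2 + (r:ℚ)) ≠ 0 := by rw [← hdQcast]; exact ne_of_gt hdQpos
  have hXval : X * (4*(n:ℚ)*(d:ℚ)) = (S:ℚ) := by
    rw [hXdef, hdQcast, hSdef]; push_cast; field_simp
  have hXr : (X:ℝ) * (4*(n:ℝ)*(d:ℝ)) = (S:ℝ) := by exact_mod_cast hXval
  -- emb values
  have he1 : (4*(n:ℝ)*(d:ℝ)) * emb d ((1:ℚ)/2, X) = 2*(n:ℝ)*(d:ℝ) + (S:ℝ)*s := by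
    simp only [emb, ← hs]
    push_cast
    linear_combination s * hXr
  have he2 : (4*(n:ℝ)*(d:ℝ)) * emb d ((1:ℚ)/2, -X) = 2*(n:ℝ)*(d:ℝ) - (S:ℝ)*s := by
    simp only [emb, ← hs]
    push_cast
    linear_combination (-s) * hXr
  -- Nm values
  have hNm1 : Nm d ((1:ℚ)/2, X) * (16*(n:ℚ)^2*(d:ℚ)) = (P:ℚ) := by
    have hXv2 : X^2 * (16*(n:ℚ)^2*(d:ℚ)^2) = (S:ℚ)^2 := by
      linear_combination (X*(4*(n:ℚ)*(d:ℚ)) + (S:ℚ)) * hXval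
    have hiQ : (S:ℚ)^2 + (P:ℚ) = 4*(n:ℚ)^2*(d:ℚ) := by exact_mod_cast hident
    simp only [Nm]
    have hd0Q : ((d:ℚ)) ≠ 0 := ne_of_gt hdQpos
    field_simp
    nlinarith [hXv2, hiQ]
  have hNm12 : Nm d ((1:ℚ)/2, X) = Nm d ((1:ℚ)/2, -X) := by simp only [Nm]; ring
  have hNm1pos : 0 < Nm d ((1:ℚ)/2, X) := by
    have h16 : (0:ℚ) < 16*(n:ℚ)^2*(d:ℚ) := by positivity
    have hPQ : (0:ℚ) < (P:ℚ) := by exact_mod_cast hPpos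
    nlinarith [hNm1]
  have hNm3 : Nm d ((α:ℚ), (β:ℚ)) = ((α^2 - d*β^2 : ℤ):ℚ) := by
    simp only [Nm]; push_cast; ring
  have hNm3pm : Nm d ((α:ℚ), (β:ℚ)) = 1 ∨ Nm d ((α:ℚ), (β:ℚ)) = -1 := by
    rcases hfund.2.2.1 with h | h
    · left; rw [hNm3]; exact_mod_cast h
    · right; rw [hNm3]; exact_mod_cast h
  -- extraction
  have extract : ∀ a b : QF, SameClass d a b → ∃ lam : ℚ, 0 < lam ∧ ∃ u : ℤ × ℤ,
      IsUnitPair d u ∧ Nm d a = lam^2 * Nm d b ∧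
      emb d a = (lam:ℝ) * emb d b * (emb d (ofInt u))^2 := by
    rintro a b ⟨lam, hlam, u, hu, heq⟩
    have hu1 : Nm d (ofInt u) * Nm d (ofInt u) = 1 := by
      have h0 : Nm d (ofInt u) = ((u.1^2 - d*u.2^2 : ℤ):ℚ) := by
        simp only [Nm, ofInt]; push_cast; ring
      rcases hu with h | h <;> rw [h0, h] <;> norm_num
    refine ⟨lam, hlam, u, hu, ?_, ?_⟩
    · rw [heq, Nm_smul, Nm_qmul, Nm_qmul, hu1]; ring
    · rw [heq, emb_smul, emb_qmul d hd0, emb_qmul d hd0]; ring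
  -- lam = 1 helper for the a₁ ↔ a₂ cases
  have hlam1 : ∀ lam : ℚ, 0 < lam → Nm d ((1:ℚ)/2, X) = lam^2 * Nm d ((1:ℚ)/2, X) → lam = 1 := by
    intro lam hlam h
    have hl2 : lam^2 = 1 := by
      have h' : Nm d ((1:ℚ)/2, X) * lam^2 = Nm d ((1:ℚ)/2, X) * 1 := by linear_combination -h
      exact mul_left_cancel₀ (ne_of_gt hNm1pos) h'
    have : (lam - 1) * (lam + 1) = 0 := by linear_combination hl2
    rcases mul_eq_zero.mp this with h | h
    · linarith
    · linarith
  refine ⟨?_, ?_, ?_, ?_, ?_, ?_⟩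
  -- a₁ vs a₂
  · intro hSC
    obtain ⟨lam, hlam, u, hu, hNm, hemb⟩ := extract _ _ hSC
    have hl1 : lam = 1 := hlam1 lam hlam (hNm.trans (by rw [← hNm12]))
    rw [hl1] at hemb
    push_cast at hemb
    rw [one_mul] at hemb
    have hembS : 2*(n:ℝ)*(d:ℝ) + (S:ℝ)*s
        = (2*(n:ℝ)*(d:ℝ) - (S:ℝ)*s) * (emb d (ofInt u))^2 := by
      calc 2*(n:ℝ)*(d:ℝ) + (S:ℝ)*s = (4*(n:ℝ)*(d:ℝ)) * emb d ((1:ℚ)/2, X) := he1.symm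
      _ = (4*(n:ℝ)*(d:ℝ)) * (emb d ((1:ℚ)/2, -X) * (emb d (ofInt u))^2) := by rw [hemb]
      _ = ((4*(n:ℝ)*(d:ℝ)) * emb d ((1:ℚ)/2, -X)) * (emb d (ofInt u))^2 := by ring
      _ = _ := by rw [he2]
    have hE2gt : 1 < (emb d (ofInt u))^2 := by nlinarith [hembS, hpos2, hspos, hSR]
    have hlow := fund_lower d α β hfund u hu hE2gt
    rw [← hs, ← hF] at hlow
    have hmul := mul_le_mul_of_nonneg_left hlow (le_of_lt hpos2)
    linarith [hmul, hembS, hKI]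
  · intro hSC
    obtain ⟨lam, hlam, u, hu, hNm, hemb⟩ := extract _ _ hSC
    have hl1 : lam = 1 := hlam1 lam hlam (hNm12.trans hNm)
    rw [hl1] at hemb
    push_cast at hemb
    rw [one_mul] at hemb
    have hembS : 2*(n:ℝ)*(d:ℝ) - (S:ℝ)*s
        = (2*(n:ℝ)*(d:ℝ) + (S:ℝ)*s) * (emb d (ofInt u))^2 := by
      calc 2*(n:ℝ)*(d:ℝ) - (S:ℝ)*s = (4*(n:ℝ)*(d:ℝ)) * emb d ((1:ℚ)/2, -X) := he2.symm
      _ = (4*(n:ℝ)*(d:ℝ)) * (emb d ((1:ℚ)/2, X) * (emb d (ofInt u))^2) := by rw [hemb]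
      _ = ((4*(n:ℝ)*(d:ℝ)) * emb d ((1:ℚ)/2, X)) * (emb d (ofInt u))^2 := by ring
      _ = _ := by rw [he1]
    have hE2lt : (emb d (ofInt u))^2 < 1 := by nlinarith [hembS, hpos1, hspos, hSR]
    have hup := fund_upper d α β hd0 hfund u hu hE2lt
    rw [← hs, ← hF] at hup
    have hx : F^2 * (2*(n:ℝ)*(d:ℝ) - (S:ℝ)*s)
        = (F^2 * (emb d (ofInt u))^2) * (2*(n:ℝ)*(d:ℝ) + (S:ℝ)*s) := by
      linear_combination F^2 * hembS
    have hmul := mul_le_mul_of_nonneg_right hup (le_of_lt hpos1)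
    linarith [hx, hmul, hKI]
  -- a₁ vs a₃
  · intro hSC
    obtain ⟨lam, hlam, u, hu, hNm, -⟩ := extract _ _ hSC
    rcases hNm3pm with h3 | h3
    · rw [h3, mul_one] at hNm
      refine ratlemma d n r hd hsf hn1 hrlb hr2 hrnem1 lam hlam ?_
      rw [hPdef] at hNm1; push_cast at hNm1
      calc lam^2 * (16*(n:ℚ)^2*(d:ℚ)) = Nm d ((1:ℚ)/2, X) * (16*(n:ℚ)^2*(d:ℚ)) := by rw [← hNm]
      _ = 4*(n:ℚ)^2 - ((r:ℚ)-1)^2 := by rw [hNm1]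
    · rw [h3] at hNm; nlinarith [hNm1pos, sq_nonneg lam]
  · intro hSC
    obtain ⟨lam, hlam, u, hu, hNm, -⟩ := extract _ _ hSC
    rcases hNm3pm with h3 | h3
    · rw [h3] at hNm
      have hlamne : lam ≠ 0 := ne_of_gt hlam
      have hinv : (lam⁻¹)^2 = Nm d ((1:ℚ)/2, X) := by
        rw [inv_pow, inv_eq_one_div, div_eq_iff (pow_ne_zero 2 hlamne)]
        linear_combination hNm
      refine ratlemma d n r hd hsf hn1 hrlb hr2 hrnem1 lam⁻¹ (by positivity) ?_
      rw [hPdef] at hNm1; push_cast at hNm1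
      calc (lam⁻¹)^2 * (16*(n:ℚ)^2*(d:ℚ)) = Nm d ((1:ℚ)/2, X) * (16*(n:ℚ)^2*(d:ℚ)) := by rw [hinv]
      _ = 4*(n:ℚ)^2 - ((r:ℚ)-1)^2 := by rw [hNm1]
    · rw [h3] at hNm; nlinarith [hNm1pos, sq_nonneg lam, hNm]
  -- a₂ vs a₃
  · intro hSC
    obtain ⟨lam, hlam, u, hu, hNm, -⟩ := extract _ _ hSC
    rw [← hNm12] at hNm
    rcases hNm3pm with h3 | h3
    · rw [h3, mul_one] at hNm
      refine ratlemma d n r hd hsf hn1 hrlb hr2 hrnem1 lam hlam ?_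
      rw [hPdef] at hNm1; push_cast at hNm1
      calc lam^2 * (16*(n:ℚ)^2*(d:ℚ)) = Nm d ((1:ℚ)/2, X) * (16*(n:ℚ)^2*(d:ℚ)) := by rw [← hNm]
      _ = 4*(n:ℚ)^2 - ((r:ℚ)-1)^2 := by rw [hNm1]
    · rw [h3] at hNm; nlinarith [hNm1pos, sq_nonneg lam]
  · intro hSC
    obtain ⟨lam, hlam, u, hu, hNm, -⟩ := extract _ _ hSC
    rw [← hNm12] at hNm
    rcases hNm3pm with h3 | h3
    · rw [h3] at hNm
      have hlamne : lam ≠ 0 := ne_of_gt hlam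
      have hinv : (lam⁻¹)^2 = Nm d ((1:ℚ)/2, X) := by
        rw [inv_pow, inv_eq_one_div, div_eq_iff (pow_ne_zero 2 hlamne)]
        linear_combination hNm
      refine ratlemma d n r hd hsf hn1 hrlb hr2 hrnem1 lam⁻¹ (by positivity) ?_
      rw [hPdef] at hNm1; push_cast at hNm1
      calc (lam⁻¹)^2 * (16*(n:ℚ)^2*(d:ℚ)) = Nm d ((1:ℚ)/2, X) * (16*(n:ℚ)^2*(d:ℚ)) := by rw [hinv]
      _ = 4*(n:ℚ)^2 - ((r:ℚ)-1)^2 := by rw [hNm1]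
    · rw [h3] at hNm; nlinarith [hNm1pos, sq_nonneg lam, hNm]
end
end

section
/- Let d be a positive square-free integer with d ≡ 2 or 3 (mod 4), d = n² + r with integers n > 0 and −n < r ≠ ±1 ≤ n, and let a₁ = 1/2 + ((2n²+r−1)/(4n(n²+r)))√d and a₂ = 1/2 − ((2n²+r−1)/(4n(n²+r)))√d in K = ℚ(√d). Then μ(a₁) = μ(a₂) and M(a₁) ∩ M(a₂) = {±1}; in particular a₁x² and a₂x² are neighbouring perfect forms. -/
/-!
We model the real quadratic field `K = ℚ(√d)` concretely: an element
`a.1 + a.2·√d` is represented by its pair of rational coordinates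
`a : ℚ × ℚ`, and the ring of integers `O_K = ℤ[√d]` (for `d ≡ 2, 3 mod 4`)
by pairs of integers `x : ℤ × ℤ` representing `x.1 + x.2·√d`.
-/

noncomputable section

lemma sq_one_le' {y : ℤ} (hy : y ≠ 0) : 1 ≤ y ^ 2 := by
  rcases hy.lt_or_gt with h | h <;> nlinarith

lemma key16 (n r x y : ℤ) (hn : 0 < n) (hr1 : -n < r) (hr2 : r ≤ n)
    (h : ¬(x = 0 ∧ y = 0)) :
    n ≤ n * (x ^ 2 + (n ^ 2 + r) * y ^ 2) + (2 * n ^ 2 + r - 1) * x * y := by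
  by_cases hy : y = 0
  · subst hy
    have hx : x ≠ 0 := by tauto
    have := sq_one_le' hx
    nlinarith
  · have hy2 : 1 ≤ y ^ 2 := sq_one_le' hy
    by_cases ht : x + n * y = 0
    · have hx : x = -(n * y) := by linarith
      subst hx
      nlinarith
    · have ht2 : 1 ≤ (x + n * y) ^ 2 := sq_one_le' ht
      nlinarith [mul_nonneg (by linarith : (0:ℤ) ≤ n - (r - 1)) (sq_nonneg (x + n * y - y)),
        mul_nonneg (by linarith : (0:ℤ) ≤ n + (r - 1)) (sq_nonneg (x + n * y + y)),
        mul_nonneg hn.le (by linarith : (0:ℤ) ≤ (x + n * y) ^ 2 - 1),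
        mul_nonneg hn.le (by linarith : (0:ℤ) ≤ y ^ 2 - 1)]

lemma min_unique {d : ℤ} {a : ℚ × ℚ} {μ μ' : ℚ} (h : IsMinOf d a μ) (h' : IsMinOf d a μ') :
    μ = μ' := by
  obtain ⟨⟨x, hx, hxe⟩, hmin⟩ := h
  obtain ⟨⟨y, hy, hye⟩, hmin'⟩ := h'
  have h1 := hmin y hy
  have h2 := hmin' x hx
  rw [hye] at h1; rw [hxe] at h2
  linarith

lemma totpos16 (d : ℤ) (c : ℚ) (hdpos : 0 < d) (hcpos : 0 < c)
    (hcd : (c : ℝ) ^ 2 * (d : ℝ) < 1 / 4) :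
    TotPos d ((1/2 : ℚ), c) ∧ TotPos d ((1/2 : ℚ), -c) := by
  have hsqd : Real.sqrt (d : ℝ) ^ 2 = (d : ℝ) := Real.sq_sqrt (by exact_mod_cast hdpos.le)
  have hsqdnn : 0 ≤ Real.sqrt (d : ℝ) := Real.sqrt_nonneg _
  have hcR : (0:ℝ) < (c : ℝ) := by exact_mod_cast hcpos
  have hpos : (0:ℝ) < ((1/2 : ℚ) : ℝ) + (c : ℝ) * Real.sqrt (d : ℝ) := by
    push_cast
    nlinarith [mul_nonneg hcR.le hsqdnn]
  have hneg : (0:ℝ) < ((1/2 : ℚ) : ℝ) + ((-c : ℚ) : ℝ) * Real.sqrt (d : ℝ) := by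
    push_cast
    nlinarith [mul_nonneg hcR.le hsqdnn, hcd, hsqd, sq_nonneg ((c:ℝ) * Real.sqrt (d:ℝ) - 1/2)]
  refine ⟨⟨hpos, hneg⟩, ⟨hneg, ?_⟩⟩
  show (0:ℝ) < ((1/2 : ℚ) : ℝ) + ((-(-c) : ℚ) : ℝ) * Real.sqrt (d : ℝ)
  rw [neg_neg]
  exact hpos

set_option maxHeartbeats 1000000 in
theorem main16 (d n r : ℤ) (hd : d = n ^ 2 + r) (hdpos : 0 < d)
    (hmod : d % 4 = 2 ∨ d % 4 = 3) (hn : 0 < n) (hr1 : -n < r) (hr2 : r ≤ n) :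
    ((1 / 2 : ℚ), (2 * (n : ℚ) ^ 2 + (r : ℚ) - 1) / (4 * (n : ℚ) * ((n : ℚ) ^ 2 + (r : ℚ))))
      ≠ ((1 / 2 : ℚ), -((2 * (n : ℚ) ^ 2 + (r : ℚ) - 1) / (4 * (n : ℚ) * ((n : ℚ) ^ 2 + (r : ℚ))))) ∧
    IsPerfect d ((1 / 2 : ℚ), (2 * (n : ℚ) ^ 2 + (r : ℚ) - 1) / (4 * (n : ℚ) * ((n : ℚ) ^ 2 + (r : ℚ)))) ∧
    IsPerfect d ((1 / 2 : ℚ), -((2 * (n : ℚ) ^ 2 + (r : ℚ) - 1) / (4 * (n : ℚ) * ((n : ℚ) ^ 2 + (r : ℚ))))) ∧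
    ∀ μ₁ μ₂ : ℚ,
      IsMinOf d ((1 / 2 : ℚ), (2 * (n : ℚ) ^ 2 + (r : ℚ) - 1) / (4 * (n : ℚ) * ((n : ℚ) ^ 2 + (r : ℚ)))) μ₁ →
      IsMinOf d ((1 / 2 : ℚ), -((2 * (n : ℚ) ^ 2 + (r : ℚ) - 1) / (4 * (n : ℚ) * ((n : ℚ) ^ 2 + (r : ℚ))))) μ₂ →
      μ₁ = μ₂ ∧
        MinVecs d ((1 / 2 : ℚ), (2 * (n : ℚ) ^ 2 + (r : ℚ) - 1) / (4 * (n : ℚ) * ((n : ℚ) ^ 2 + (r : ℚ)))) μ₁ ∩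
          MinVecs d ((1 / 2 : ℚ), -((2 * (n : ℚ) ^ 2 + (r : ℚ) - 1) / (4 * (n : ℚ) * ((n : ℚ) ^ 2 + (r : ℚ))))) μ₂
          = ({(1, 0), (-1, 0)} : Set (ℤ × ℤ)) := by
  set c : ℚ := (2 * (n : ℚ) ^ 2 + (r : ℚ) - 1) / (4 * (n : ℚ) * ((n : ℚ) ^ 2 + (r : ℚ))) with hc
  have hd2 : 2 ≤ d := by omega
  have hnum : 0 < 2 * n ^ 2 + r - 1 := by nlinarith
  have hnQ : (0:ℚ) < (n : ℚ) := by exact_mod_cast hn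
  have hdcast : ((d : ℤ) : ℚ) = (n : ℚ) ^ 2 + (r : ℚ) := by rw [hd]; push_cast; ring
  have hdQ : (0:ℚ) < (n : ℚ) ^ 2 + (r : ℚ) := by
    rw [← hdcast]; exact_mod_cast hdpos
  have hnumQ : (0:ℚ) < 2 * (n : ℚ) ^ 2 + (r : ℚ) - 1 := by exact_mod_cast hnum
  have hcpos : 0 < c := by
    rw [hc]; positivity
  -- trForm formulas
  have tr1 : ∀ x y : ℤ, trForm d ((1/2 : ℚ), c) (x, y)
      = (x : ℚ) ^ 2 + ((n : ℚ) ^ 2 + r) * (y : ℚ) ^ 2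
        + ((2 * (n : ℚ) ^ 2 + r - 1) / n) * ((x : ℚ) * y) := by
    intro x y
    simp only [trForm, hc, hdcast]
    field_simp
    ring
  have tr2 : ∀ x y : ℤ, trForm d ((1/2 : ℚ), -c) (x, y)
      = (x : ℚ) ^ 2 + ((n : ℚ) ^ 2 + r) * (y : ℚ) ^ 2
        - ((2 * (n : ℚ) ^ 2 + r - 1) / n) * ((x : ℚ) * y) := by
    intro x y
    simp only [trForm, hc, hdcast]
    field_simp
    ring
  -- lower bounds
  have hbound1 : ∀ x : ℤ × ℤ, x ≠ 0 → 1 ≤ trForm d ((1/2 : ℚ), c) x := by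
    rintro ⟨x, y⟩ hx
    have hxy : ¬(x = 0 ∧ y = 0) := by
      rintro ⟨h1, h2⟩; exact hx (by rw [h1, h2]; rfl)
    have hk := key16 n r x y hn hr1 hr2 hxy
    have hkQ : (n : ℚ) ≤ (n : ℚ) * ((x : ℚ) ^ 2 + ((n:ℚ)^2 + r) * (y:ℚ) ^ 2)
        + (2 * (n:ℚ) ^ 2 + r - 1) * (x:ℚ) * (y:ℚ) := by exact_mod_cast hk
    have he : (n : ℚ) * trForm d ((1/2 : ℚ), c) (x, y)
        = (n : ℚ) * ((x : ℚ) ^ 2 + ((n:ℚ)^2 + r) * (y:ℚ) ^ 2)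
          + (2 * (n:ℚ) ^ 2 + r - 1) * (x:ℚ) * (y:ℚ) := by
      rw [tr1]; field_simp
    nlinarith [he, hkQ]
  have hbound2 : ∀ x : ℤ × ℤ, x ≠ 0 → 1 ≤ trForm d ((1/2 : ℚ), -c) x := by
    rintro ⟨x, y⟩ hx
    have hxy : ¬(x = 0 ∧ -y = 0) := by
      rintro ⟨h1, h2⟩
      exact hx (by rw [h1, show y = 0 by omega]; rfl)
    have hk := key16 n r x (-y) hn hr1 hr2 hxy
    have hkQ : (n : ℚ) ≤ (n : ℚ) * ((x : ℚ) ^ 2 + ((n:ℚ)^2 + r) * (y:ℚ) ^ 2)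
        - (2 * (n:ℚ) ^ 2 + r - 1) * (x:ℚ) * (y:ℚ) := by
      have h5 : (n : ℚ) ≤ (n : ℚ) * ((x : ℚ) ^ 2 + ((n:ℚ)^2 + r) * ((-y : ℤ):ℚ) ^ 2)
        + (2 * (n:ℚ) ^ 2 + r - 1) * (x:ℚ) * ((-y : ℤ):ℚ) := by exact_mod_cast hk
      push_cast at h5 ⊢; linarith
    have he : (n : ℚ) * trForm d ((1/2 : ℚ), -c) (x, y)
        = (n : ℚ) * ((x : ℚ) ^ 2 + ((n:ℚ)^2 + r) * (y:ℚ) ^ 2)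
          - (2 * (n:ℚ) ^ 2 + r - 1) * (x:ℚ) * (y:ℚ) := by
      rw [tr2]; field_simp
    nlinarith [he, hkQ]
  -- values at special vectors
  have v1 : trForm d ((1/2 : ℚ), c) (1, 0) = 1 := by rw [tr1]; push_cast; field_simp; ring
  have v1' : trForm d ((1/2 : ℚ), c) (-1, 0) = 1 := by rw [tr1]; push_cast; field_simp; ring
  have v2 : trForm d ((1/2 : ℚ), -c) (1, 0) = 1 := by rw [tr2]; push_cast; field_simp; ring
  have v2' : trForm d ((1/2 : ℚ), -c) (-1, 0) = 1 := by rw [tr2]; push_cast; field_simp; ring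
  have w1 : trForm d ((1/2 : ℚ), c) (n, -1) = 1 := by
    rw [tr1]; push_cast; field_simp; ring
  have w2 : trForm d ((1/2 : ℚ), -c) (n, 1) = 1 := by
    rw [tr2]; push_cast; field_simp; ring
  have hmin1 : IsMinOf d ((1/2 : ℚ), c) 1 :=
    ⟨⟨(1, 0), by simp, v1⟩, hbound1⟩
  have hmin2 : IsMinOf d ((1/2 : ℚ), -c) 1 :=
    ⟨⟨(1, 0), by simp, v2⟩, hbound2⟩
  -- total positivity
  have hcdQ : c ^ 2 * ((n:ℚ)^2 + r) < 1 / 4 := by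
    rw [hc, div_pow, div_mul_eq_mul_div, div_lt_div_iff₀ (by positivity) (by norm_num)]
    have hrn : ((r:ℚ) - 1) ^ 2 < 4 * (n:ℚ) ^ 2 := by
      have h1 : (r : ℚ) ≤ n := by exact_mod_cast hr2
      have h2 : -(n : ℚ) < r := by exact_mod_cast hr1
      nlinarith
    nlinarith [hdQ, sq_nonneg ((n:ℚ)^2 + r)]
  have hcd : (c : ℝ) ^ 2 * (d : ℝ) < 1 / 4 := by
    have h7 : ((c ^ 2 * ((n:ℚ)^2 + r) : ℚ) : ℝ) < ((1/4 : ℚ) : ℝ) := by exact_mod_cast hcdQ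
    push_cast at h7
    have hdr : ((d : ℤ) : ℝ) = (n : ℝ) ^ 2 + (r : ℝ) := by rw [hd]; push_cast; ring
    rw [hdr]
    convert h7 using 2
  obtain ⟨htp1, htp2⟩ := totpos16 d c hdpos hcpos hcd
  -- perfection
  have hperf1 : IsPerfect d ((1/2 : ℚ), c) := by
    refine ⟨htp1, 1, hmin1, ?_⟩
    rintro ⟨b1, b2⟩ _ _ hsub
    have hb1 : trForm d (b1, b2) (1, 0) = 1 := hsub v1
    have hb2 : trForm d (b1, b2) (n, -1) = 1 := hsub w1
    simp only [trForm] at hb1 hb2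
    push_cast at hb1 hb2
    rw [hdcast] at hb1 hb2
    have hb1' : b1 = 1 / 2 := by linarith [hb1]
    subst hb1'
    have : b2 = c := by
      rw [hc, eq_div_iff (by positivity)]
      nlinarith [hb2]
    rw [this]
  have hperf2 : IsPerfect d ((1/2 : ℚ), -c) := by
    refine ⟨htp2, 1, hmin2, ?_⟩
    rintro ⟨b1, b2⟩ _ _ hsub
    have hb1 : trForm d (b1, b2) (1, 0) = 1 := hsub v2
    have hb2 : trForm d (b1, b2) (n, 1) = 1 := hsub w2
    simp only [trForm] at hb1 hb2
    push_cast at hb1 hb2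
    rw [hdcast] at hb1 hb2
    have hb1' : b1 = 1 / 2 := by linarith [hb1]
    subst hb1'
    have : b2 = -c := by
      rw [hc, ← neg_div, eq_div_iff (by positivity)]
      nlinarith [hb2]
    rw [this]
  refine ⟨?_, hperf1, hperf2, ?_⟩
  · intro h
    have := (Prod.mk.injEq _ _ _ _).mp h
    have h2 : c = -c := this.2
    linarith
  · intro μ₁ μ₂ h₁ h₂
    have e₁ : μ₁ = 1 := min_unique h₁ hmin1
    have e₂ : μ₂ = 1 := min_unique h₂ hmin2
    subst e₁; subst e₂
    refine ⟨rfl, ?_⟩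
    ext ⟨x, y⟩
    simp only [Set.mem_inter_iff, MinVecs, Set.mem_setOf_eq, Set.mem_insert_iff,
      Set.mem_singleton_iff]
    constructor
    · rintro ⟨hx1, hx2⟩
      rw [tr1] at hx1
      rw [tr2] at hx2
      -- xy = 0 and x² + d y² = 1
      have hxy : (x : ℚ) * y = 0 := by
        have hcoef : (2 * (n:ℚ)^2 + r - 1) / n ≠ 0 := by positivity
        have h6 : ((2 * (n:ℚ)^2 + r - 1) / n) * ((x:ℚ) * y) = 0 := by linarith
        exact (mul_eq_zero.mp h6).resolve_left hcoef
      have hsum : (x : ℚ) ^ 2 + ((n:ℚ)^2 + r) * (y:ℚ) ^ 2 = 1 := by linarith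
      have hxyZ : x * y = 0 := by exact_mod_cast hxy
      have hsumZ : x ^ 2 + (n ^ 2 + r) * y ^ 2 = 1 := by exact_mod_cast hsum
      have hdz : 2 ≤ n ^ 2 + r := by linarith [hd2, hd.symm.le, hd.le]
      have hy0 : y = 0 := by
        by_contra hne
        have h2 : 1 ≤ y ^ 2 := sq_one_le' hne
        nlinarith [sq_nonneg x]
      have hx1Z : x = 1 ∨ x = -1 := by
        have hx2 : x ^ 2 = 1 := by rw [hy0] at hsumZ; nlinarith [hsumZ]
        have h0 : (x - 1) * (x + 1) = 0 := by nlinarith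
        rcases mul_eq_zero.mp h0 with h | h
        · left; linarith
        · right; linarith
      rcases hx1Z with h | h
      · left; rw [h, hy0]
      · right; rw [h, hy0]
    · rintro (h | h) <;>
        obtain ⟨h1, h2⟩ := Prod.mk.injEq .. ▸ h <;> subst h1 <;> subst h2
      · exact ⟨v1, v2⟩
      · exact ⟨v1', v2'⟩

/-- `μ(a₁) = μ(a₂)` and `M(a₁) ∩ M(a₂) = {±1}`; in particular
`a₁ x²` and `a₂ x²` are distinct perfect forms that are neighbours. -/
theorem statement16 (d n r : ℤ) (hd : d = n ^ 2 + r) (hdpos : 0 < d) (hsf : Squarefree d)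
    (hmod : d % 4 = 2 ∨ d % 4 = 3) (hn : 0 < n) (hr1 : -n < r) (hr2 : r ≤ n)
    (hrne1 : r ≠ 1) (hrnem1 : r ≠ -1) :
    let a₁ : QF := (1 / 2, (2 * (n : ℚ) ^ 2 + (r : ℚ) - 1) / (4 * (n : ℚ) * ((n : ℚ) ^ 2 + (r : ℚ))))
    let a₂ : QF := (1 / 2, -((2 * (n : ℚ) ^ 2 + (r : ℚ) - 1) / (4 * (n : ℚ) * ((n : ℚ) ^ 2 + (r : ℚ)))))
    a₁ ≠ a₂ ∧ IsPerfect d a₁ ∧ IsPerfect d a₂ ∧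
      ∀ μ₁ μ₂ : ℚ, IsMinOf d a₁ μ₁ → IsMinOf d a₂ μ₂ →
        μ₁ = μ₂ ∧
          MinVecs d a₁ μ₁ ∩ MinVecs d a₂ μ₂ = ({(1, 0), (-1, 0)} : Set (ℤ × ℤ)) := by
  intro a₁ a₂
  exact main16 d n r hd hdpos hmod hn hr1 hr2
end
end
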